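/- arXiv:1309.7386 — 5 statements merged into one kernel-verified Lean document; each statement's English description precedes it below -/
import Mathlib

section
/- Fix an integer base g ≥ 2, a real ε > 0, and an integer k ≥ 1. Then there exist δ < 1 and x_0 such that for all real x > x_0, the number of positive integers n ≤ x that are not (ε,k)-normal is less than x^δ. -/
open Filter

noncomputable def plog (x : ℝ) : ℝ := max 1 (Real.log x)

noncomputable def countIn (E : Set ℕ) (x : ℝ) : ℕ :=
  {n : ℕ | 0 < n ∧ (n : ℝ) ≤ x ∧ n ∈ E}.ncard

def Meager (E : Set ℕ) : Prop :=
  ∃ δ : ℝ, δ < 1 ∧ ∃ x₀ : ℝ, ∀ x : ℝ, x > x₀ → (countIn E x : ℝ) < x ^ δ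

def Thin (E : Set ℕ) : Prop :=
  ∃ θ : ℝ, 0 < θ ∧ ∃ x₀ : ℝ, ∀ x : ℝ, x > x₀ → (countIn E x : ℝ) < x / Real.exp (plog x ^ θ)

def DensityZero (S : Set ℕ) : Prop :=
  Filter.Tendsto (fun x : ℝ => (countIn S x : ℝ) / x) Filter.atTop (nhds 0)

/-- The infinite digit sequence obtained by concatenating the base-`g` digit strings
(least significant digit first) of `f 1`, `f 2`, `f 3`, …. Correct whenever each `f m ≥ 1`
(so each digit block is nonempty). -/
def digitSeq (g : ℕ) (f : ℕ → ℕ) (j : ℕ) : ℕ :=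
  ((List.range (j + 1)).flatMap (fun i => Nat.digits g (f (i + 1)))).getD j 0

/-- Number of occurrences of the word `w` among the first `N` digits of the sequence `D`. -/
noncomputable def occCount (D : ℕ → ℕ) (w : List ℕ) (N : ℕ) : ℕ :=
  {j : ℕ | j + w.length ≤ N ∧ ∀ i < w.length, D (j + i) = w.getD i 0}.ncard

/-- The digit sequence `D` is normal in base `g`. -/
def IsNormal (g : ℕ) (D : ℕ → ℕ) : Prop :=
  ∀ w : List ℕ, w ≠ [] → (∀ d ∈ w, d < g) →
    Filter.Tendsto (fun N : ℕ => (occCount D w N : ℝ) / N)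
      Filter.atTop (nhds (((g : ℝ) ^ w.length)⁻¹))

/-- Carmichael's lambda function: the exponent of the unit group of `ℤ/nℤ`. -/
noncomputable def carmichael (n : ℕ) : ℕ := Monoid.exponent (ZMod n)ˣ

/-- The sum-of-divisors function `σ`. -/
def sigma1 (n : ℕ) : ℕ := ∑ d ∈ n.divisors, d

/-- `Ω n`: the number of prime factors of `n` counted with multiplicity. -/
def BigOmega (n : ℕ) : ℕ := (Nat.primeFactorsList n).length

/-- Composition of a list of arithmetic functions. -/
def composeList (l : List (ℕ → ℕ)) : ℕ → ℕ := l.foldr (· ∘ ·) id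

/-- `ν g n w`: the number of occurrences of the word `w` in the base-`g` digit string of `n`. -/
noncomputable def nu (g n : ℕ) (w : List ℕ) : ℕ :=
  {j : ℕ | j + w.length ≤ (Nat.digits g n).length ∧
    ∀ i < w.length, (Nat.digits g n).getD (j + i) 0 = w.getD i 0}.ncard

/-- `n` is `(ε, k)`-normal in base `g`. -/
def EpsKNormal (g : ℕ) (ε : ℝ) (k : ℕ) (n : ℕ) : Prop :=
  ∀ w : List ℕ, w.length = k → (∀ d ∈ w, d < g) →
    (((g : ℝ) ^ k)⁻¹ - ε) * (Nat.digits g n).length < nu g n w ∧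
    (nu g n w : ℝ) < (((g : ℝ) ^ k)⁻¹ + ε) * (Nat.digits g n).length


section Aux


lemma mod_mul_split (a b c : ℕ) : a % (b * c) = b * (a / b % c) + a % b := by
  have e1 : a % (b * c) % b = a % b := Nat.mod_mod_of_dvd a (dvd_mul_right b c)
  have e2 : a % (b * c) / b = a / b % c := Nat.mod_mul_right_div_self a b c
  have e3 := Nat.div_add_mod (a % (b * c)) b
  rw [e1, e2] at e3
  omega

/-- digit extraction -/
lemma getD_digits {g : ℕ} (hg : 2 ≤ g) (n i : ℕ) :
    (Nat.digits g n).getD i 0 = n / g ^ i % g := by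
  induction i generalizing n with
  | zero =>
    rcases Nat.eq_zero_or_pos n with h | h
    · simp [h]
    · rw [Nat.digits_def' (by omega : 1 < g) h]; simp
  | succ i ih =>
    rcases Nat.eq_zero_or_pos n with h | h
    · simp [h]
    · rw [Nat.digits_def' (by omega : 1 < g) h]
      simp only [List.getD_cons_succ]
      rw [ih (n / g), Nat.div_div_eq_div_mul, ← pow_succ']

/-- word match iff value match -/
lemma match_iff {g : ℕ} (hg : 2 ≤ g) (w : List ℕ) (hw : ∀ d ∈ w, d < g) (n : ℕ) :
    (∀ i < w.length, n / g ^ i % g = w.getD i 0) ↔ n % g ^ w.length = Nat.ofDigits g w := by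
  induction w generalizing n with
  | nil => simp [Nat.mod_one]
  | cons d t ih =>
    have hd : d < g := hw d List.mem_cons_self
    have ht : ∀ x ∈ t, x < g := fun x hx => hw x (List.mem_cons_of_mem d hx)
    have hofd : Nat.ofDigits g t < g ^ t.length :=
      Nat.ofDigits_lt_base_pow_length (by omega) ht
    have hsplit : n % (g * g ^ t.length) = g * (n / g % g ^ t.length) + n % g :=
      mod_mul_split n g (g ^ t.length)
    constructor
    · intro h
      have h0 : n % g = d := by simpa using h 0 (by simp)
      have h1 : ∀ i < t.length, (n / g) / g ^ i % g = t.getD i 0 := by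
        intro i hi
        have := h (i + 1) (by simpa using Nat.succ_lt_succ hi)
        simpa [Nat.div_div_eq_div_mul, ← pow_succ'] using this
      have h2 := (ih ht (n / g)).1 h1
      rw [Nat.ofDigits_cons, List.length_cons, pow_succ']
      rw [hsplit, h0, h2]; ring
    · intro h i hi
      rw [List.length_cons, pow_succ', hsplit, Nat.ofDigits_cons] at h
      have hnm : n % g < g := Nat.mod_lt _ (by omega)
      have h0 : n % g = d := by
        have := congrArg (· % g) h
        simpa [Nat.mul_add_mod, Nat.mod_eq_of_lt hnm, Nat.mod_eq_of_lt hd] using this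
      have h2 : n / g % g ^ t.length = Nat.ofDigits g t := by
        rw [h0] at h
        rw [Nat.add_comm] at h
        exact Nat.eq_of_mul_eq_mul_left (by omega) (Nat.add_left_cancel h)
      rcases i with _ | i
      · simpa using h0
      · have := (ih ht (n / g)).2 h2 i (by simpa using hi)
        simp only [List.getD_cons_succ]
        rw [← this, Nat.div_div_eq_div_mul, ← pow_succ']

lemma mod_pow_eq_ofDigits (G : ℕ) (m : ℕ) (a : ℕ) :
    a % G ^ m = Nat.ofDigits G (List.ofFn fun i : Fin m => a / G ^ (i : ℕ) % G) := by
  induction m generalizing a with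
  | zero => simp [Nat.mod_one]
  | succ m ih =>
    rw [List.ofFn_succ, Nat.ofDigits_cons, pow_succ', mod_mul_split a G (G ^ m)]
    simp only [Fin.val_succ, Fin.val_zero, pow_zero, Nat.div_one]
    rw [ih (a / G)]
    have e : (List.ofFn fun i : Fin m => a / G ^ ((i : ℕ) + 1) % G)
        = List.ofFn fun i : Fin m => (a / G) / G ^ (i : ℕ) % G := by
      refine congrArg _ (funext fun i => ?_)
      rw [Nat.div_div_eq_div_mul, ← pow_succ']
    rw [e]
    omega

/-- key injection counting lemma -/
lemma card_filter_block_le {g : ℕ} (hg : 2 ≤ g) (L r m k : ℕ)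
    (hrm : r + m * k ≤ L) (P : (Fin m → ℕ) → Prop) [DecidablePred P] :
    ((Finset.range (g ^ L)).filter fun n => P (fun i : Fin m => n / g ^ (r + i * k) % g ^ k)).card
      ≤ ((Fintype.piFinset fun _ : Fin m => Finset.range (g ^ k)).filter P).card * g ^ (L - m * k) := by
  classical
  set T := (((Fintype.piFinset fun _ : Fin m => Finset.range (g ^ k)).filter P) ×ˢ
    (Finset.range (g ^ r) ×ˢ Finset.range (g ^ (L - (r + m * k))))) with hT
  have hcard : T.card = ((Fintype.piFinset fun _ : Fin m => Finset.range (g ^ k)).filter P).card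
      * g ^ (L - m * k) := by
    rw [hT, Finset.card_product, Finset.card_product, Finset.card_range, Finset.card_range,
      ← pow_add]
    congr 2
    omega
  rw [← hcard]
  apply Finset.card_le_card_of_injOn
    (fun n => ((fun i : Fin m => n / g ^ (r + (i : ℕ) * k) % g ^ k), (n % g ^ r, n / g ^ (r + m * k))))
  · intro n hn
    simp only [Finset.mem_coe, Finset.mem_filter, Finset.mem_range] at hn
    simp only [Finset.mem_coe, hT, Finset.mem_product, Finset.mem_filter, Fintype.mem_piFinset, Finset.mem_range]
    refine ⟨⟨fun i => Nat.mod_lt _ (by positivity), hn.2⟩, Nat.mod_lt _ (by positivity), ?_⟩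
    rw [Nat.div_lt_iff_lt_mul (by positivity), ← pow_add]
    have : L - (r + m * k) + (r + m * k) = L := by omega
    rw [this]
    exact hn.1
  · intro n hn n' hn' he
    simp only [Prod.mk.injEq] at he
    obtain ⟨hb, hlo, hhi⟩ := he
    -- reconstruct n from the three components
    have key : ∀ a : ℕ, a = g ^ (r + m * k) * (a / g ^ (r + m * k))
        + (g ^ r * Nat.ofDigits (g ^ k)
            (List.ofFn fun i : Fin m => a / g ^ (r + (i : ℕ) * k) % g ^ k) + a % g ^ r) := by
      intro a
      have e1 : a % g ^ (r + m * k) = g ^ r * (a / g ^ r % (g ^ k) ^ m) + a % g ^ r := by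
        have h0 := mod_mul_split a (g ^ r) ((g ^ k) ^ m)
        have hpow : g ^ r * (g ^ k) ^ m = g ^ (r + m * k) := by
          rw [← pow_mul, ← pow_add, mul_comm k m]
        rwa [hpow] at h0
      have e2 : a / g ^ r % (g ^ k) ^ m = Nat.ofDigits (g ^ k)
          (List.ofFn fun i : Fin m => a / g ^ (r + (i : ℕ) * k) % g ^ k) := by
        rw [mod_pow_eq_ofDigits]
        refine congrArg _ (congrArg _ (funext fun i => ?_))
        rw [Nat.div_div_eq_div_mul, ← pow_mul, ← pow_add, mul_comm k (i : ℕ)]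
      rw [← e2, ← e1]
      exact (Nat.div_add_mod a (g ^ (r + m * k))).symm
    rw [key n, key n', hlo, hhi, hb]





lemma sum_pow_count (G m s : ℕ) (hs : s < G) (y : ℝ) :
    ∑ b ∈ Fintype.piFinset (fun _ : Fin m => Finset.range G),
      y ^ ((Finset.univ.filter (fun i => b i = s)).card) = (y + ((G : ℝ) - 1)) ^ m := by
  classical
  have key : ∀ b : Fin m → ℕ, y ^ ((Finset.univ.filter (fun i => b i = s)).card)
      = ∏ i : Fin m, (if b i = s then y else 1) := by
    intro b
    rw [Finset.prod_ite, Finset.prod_const, Finset.prod_const_one, mul_one]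
  simp_rw [key]
  have hfub := Finset.prod_univ_sum (fun _ : Fin m => Finset.range G)
    (fun (_ : Fin m) (d : ℕ) => if d = s then y else (1 : ℝ))
  rw [← hfub]
  have hsum : ∑ d ∈ Finset.range G, (if d = s then y else 1) = y + ((G : ℝ) - 1) := by
    have : ∀ d : ℕ, (if d = s then y else 1) = (if d = s then y - 1 else 0) + 1 := by
      intro d; split <;> ring
    simp_rw [this]
    rw [Finset.sum_add_distrib, Finset.sum_ite_eq' (Finset.range G) s (fun _ => y - 1)]
    simp [Finset.mem_range.mpr hs]
    ring
  rw [Finset.prod_congr rfl (fun _ _ => hsum), Finset.prod_const]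
  simp

lemma chernoff_upper (G m s : ℕ) (hs : s < G) (y : ℝ) (hy : 1 ≤ y) (c : ℝ) :
    (((Fintype.piFinset (fun _ : Fin m => Finset.range G)).filter
        (fun b => c ≤ ((Finset.univ.filter (fun i => b i = s)).card : ℝ))).card : ℝ) * y ^ c
      ≤ (y + ((G : ℝ) - 1)) ^ m := by
  classical
  have hy0 : 0 < y := by linarith
  rw [← sum_pow_count G m s hs y]
  calc (((Fintype.piFinset (fun _ : Fin m => Finset.range G)).filter
        (fun b => c ≤ ((Finset.univ.filter (fun i => b i = s)).card : ℝ))).card : ℝ) * y ^ c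
      = ∑ b ∈ (Fintype.piFinset (fun _ : Fin m => Finset.range G)).filter
        (fun b => c ≤ ((Finset.univ.filter (fun i => b i = s)).card : ℝ)), y ^ c := by
        rw [Finset.sum_const, nsmul_eq_mul]
    _ ≤ ∑ b ∈ (Fintype.piFinset (fun _ : Fin m => Finset.range G)).filter
        (fun b => c ≤ ((Finset.univ.filter (fun i => b i = s)).card : ℝ)),
          y ^ ((Finset.univ.filter (fun i => b i = s)).card) := by
        apply Finset.sum_le_sum
        intro b hb
        simp only [Finset.mem_filter] at hb
        calc y ^ c ≤ y ^ (((Finset.univ.filter (fun i => b i = s)).card : ℝ)) :=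
              Real.rpow_le_rpow_of_exponent_le hy hb.2
          _ = y ^ ((Finset.univ.filter (fun i => b i = s)).card) := Real.rpow_natCast y _
    _ ≤ ∑ b ∈ Fintype.piFinset (fun _ : Fin m => Finset.range G),
          y ^ ((Finset.univ.filter (fun i => b i = s)).card) := by
        apply Finset.sum_le_sum_of_subset_of_nonneg (Finset.filter_subset _ _)
        intro b _ _
        positivity

lemma chernoff_lower (G m s : ℕ) (hs : s < G) (y : ℝ) (hy0 : 0 < y) (hy : y ≤ 1) (c : ℝ) :
    (((Fintype.piFinset (fun _ : Fin m => Finset.range G)).filter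
        (fun b => ((Finset.univ.filter (fun i => b i = s)).card : ℝ) ≤ c)).card : ℝ) * y ^ c
      ≤ (y + ((G : ℝ) - 1)) ^ m := by
  classical
  rw [← sum_pow_count G m s hs y]
  calc (((Fintype.piFinset (fun _ : Fin m => Finset.range G)).filter
        (fun b => ((Finset.univ.filter (fun i => b i = s)).card : ℝ) ≤ c)).card : ℝ) * y ^ c
      = ∑ b ∈ (Fintype.piFinset (fun _ : Fin m => Finset.range G)).filter
        (fun b => ((Finset.univ.filter (fun i => b i = s)).card : ℝ) ≤ c), y ^ c := by
        rw [Finset.sum_const, nsmul_eq_mul]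
    _ ≤ ∑ b ∈ (Fintype.piFinset (fun _ : Fin m => Finset.range G)).filter
        (fun b => ((Finset.univ.filter (fun i => b i = s)).card : ℝ) ≤ c),
          y ^ ((Finset.univ.filter (fun i => b i = s)).card) := by
        apply Finset.sum_le_sum
        intro b hb
        simp only [Finset.mem_filter] at hb
        calc y ^ c ≤ y ^ (((Finset.univ.filter (fun i => b i = s)).card : ℝ)) :=
              Real.rpow_le_rpow_of_exponent_ge hy0 hy hb.2
          _ = y ^ ((Finset.univ.filter (fun i => b i = s)).card) := Real.rpow_natCast y _
    _ ≤ ∑ b ∈ Fintype.piFinset (fun _ : Fin m => Finset.range G),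
          y ^ ((Finset.univ.filter (fun i => b i = s)).card) := by
        apply Finset.sum_le_sum_of_subset_of_nonneg (Finset.filter_subset _ _)
        intro b _ _
        positivity



lemma exists_gt_of_deriv_neg (f : ℝ → ℝ) (c : ℝ) (hd : HasDerivAt f c 1) (hc : c < 0) :
    ∃ y : ℝ, 1 < y ∧ f y < f 1 := by
  have hs := hasDerivAt_iff_tendsto_slope.mp hd
  have hev : ∀ᶠ z in nhdsWithin 1 {(1:ℝ)}ᶜ, slope f 1 z < 0 :=
    hs.eventually_lt_const hc
  have hle : nhdsWithin (1:ℝ) (Set.Ioi 1) ≤ nhdsWithin 1 {(1:ℝ)}ᶜ :=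
    nhdsWithin_mono 1 (fun z hz => ne_of_gt hz)
  have hev2 : ∀ᶠ z in nhdsWithin (1:ℝ) (Set.Ioi 1), slope f 1 z < 0 ∧ 1 < z :=
    (hev.filter_mono hle).and (eventually_mem_nhdsWithin.mono fun z hz => hz)
  obtain ⟨z, hz, h1z⟩ := hev2.exists
  refine ⟨z, h1z, ?_⟩
  rw [slope_def_field] at hz
  rcases div_neg_iff.mp hz with ⟨_, h⟩ | ⟨h, _⟩ <;> linarith

lemma exists_lt_of_deriv_pos (f : ℝ → ℝ) (c : ℝ) (hd : HasDerivAt f c 1) (hc : 0 < c) :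
    ∃ y : ℝ, 0 < y ∧ y < 1 ∧ f y < f 1 := by
  have hs := hasDerivAt_iff_tendsto_slope.mp hd
  have hev : ∀ᶠ z in nhdsWithin 1 {(1:ℝ)}ᶜ, 0 < slope f 1 z :=
    hs.eventually_const_lt hc
  have hle : nhdsWithin (1:ℝ) (Set.Ioo 0 1) ≤ nhdsWithin 1 {(1:ℝ)}ᶜ :=
    nhdsWithin_mono 1 (fun z hz => ne_of_lt hz.2)
  have hne : (nhdsWithin (1:ℝ) (Set.Ioo 0 1)).NeBot := by
    apply mem_closure_iff_nhdsWithin_neBot.mp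
    rw [closure_Ioo (by norm_num : (0:ℝ) ≠ 1)]
    exact Set.mem_Icc.mpr ⟨by norm_num, le_refl 1⟩
  have hev2 : ∀ᶠ z in nhdsWithin (1:ℝ) (Set.Ioo 0 1), 0 < slope f 1 z ∧ z ∈ Set.Ioo (0:ℝ) 1 :=
    (hev.filter_mono hle).and (eventually_mem_nhdsWithin.mono fun z hz => hz)
  obtain ⟨z, hz, h0z, h1z⟩ := hev2.exists
  refine ⟨z, h0z, h1z, ?_⟩
  rw [slope_def_field] at hz
  rcases div_pos_iff.mp hz with ⟨_, h⟩ | ⟨h1, h2⟩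
  · linarith
  · linarith

lemma exists_tilt_upper (G : ℝ) (hG : 2 ≤ G) (q : ℝ) (hq0 : 0 < q) (hq1 : 1 < G * q) :
    ∃ y : ℝ, 1 < y ∧ y + (G - 1) < G * y ^ q := by
  have hd : HasDerivAt (fun y : ℝ => y + (G - 1) - G * y ^ q) (1 - G * q) 1 := by
    have h1 : HasDerivAt (fun y : ℝ => y + (G - 1)) 1 1 := (hasDerivAt_id 1).add_const _
    have h2 : HasDerivAt (fun y : ℝ => G * y ^ q) (G * (q * (1:ℝ) ^ (q - 1))) 1 :=
      (Real.hasDerivAt_rpow_const (Or.inl one_ne_zero)).const_mul G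
    have := h1.sub h2
    simp only [Real.one_rpow, mul_one] at this
    exact this
  obtain ⟨y, hy1, hy⟩ := exists_gt_of_deriv_neg _ _ hd (by linarith)
  refine ⟨y, hy1, ?_⟩
  simp only [Real.one_rpow] at hy
  nlinarith [hy]

lemma exists_tilt_lower (G : ℝ) (hG : 2 ≤ G) (q : ℝ) (hq0 : 0 < q) (hq1 : G * q < 1) :
    ∃ z : ℝ, 0 < z ∧ z < 1 ∧ z + (G - 1) < G * z ^ q := by
  have hd : HasDerivAt (fun y : ℝ => y + (G - 1) - G * y ^ q) (1 - G * q) 1 := by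
    have h1 : HasDerivAt (fun y : ℝ => y + (G - 1)) 1 1 := (hasDerivAt_id 1).add_const _
    have h2 : HasDerivAt (fun y : ℝ => G * y ^ q) (G * (q * (1:ℝ) ^ (q - 1))) 1 :=
      (Real.hasDerivAt_rpow_const (Or.inl one_ne_zero)).const_mul G
    have := h1.sub h2
    simp only [Real.one_rpow, mul_one] at this
    exact this
  obtain ⟨z, hz0, hz1, hz⟩ := exists_lt_of_deriv_pos _ _ hd (by linarith)
  refine ⟨z, hz0, hz1, ?_⟩
  simp only [Real.one_rpow] at hz
  nlinarith [hz]

end Aux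
lemma reduction {g k : ℕ} (hg : 2 ≤ g) (hk : 1 ≤ k) {ε ε₀ : ℝ}
    (hε₀ : 0 < ε₀) (hε₀ε : ε₀ ≤ ε) (hε₀p : ε₀ ≤ ((g:ℝ)^k)⁻¹ / 2)
    {L n : ℕ} (hLk : 2 ≤ L / k) (hm6 : 6 / ε₀ ≤ ((L / k - 2 : ℕ) : ℝ))
    (hlen : (Nat.digits g n).length = L) (hbad : ¬ EpsKNormal g ε k n) :
    ∃ r < k, ∃ s < g ^ k,
      ((((g:ℝ)^k)⁻¹ + ε₀/2) * ((L / k - 2 : ℕ) : ℝ) ≤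
        (((Finset.univ : Finset (Fin (L / k - 2))).filter
          (fun i : Fin (L / k - 2) => n / g ^ (r + (i:ℕ) * k) % g ^ k = s)).card : ℝ)) ∨
      ((((Finset.univ : Finset (Fin (L / k - 2))).filter
          (fun i : Fin (L / k - 2) => n / g ^ (r + (i:ℕ) * k) % g ^ k = s)).card : ℝ) ≤
        (((g:ℝ)^k)⁻¹ - ε₀/2) * ((L / k - 2 : ℕ) : ℝ)) := by
  classical
  have hk0 : 0 < k := hk
  have hg1 : 1 < g := by omega
  set m := L / k - 2 with hmdef
  set P : ℝ := ((g:ℝ)^k)⁻¹ with hPdef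
  have hgk1 : (1:ℝ) ≤ (g:ℝ)^k := one_le_pow₀ (by exact_mod_cast (by omega : 1 ≤ g))
  have hP0 : 0 < P := by rw [hPdef]; positivity
  have hP1 : P ≤ 1 := by rw [hPdef]; exact inv_le_one_of_one_le₀ hgk1
  have hkR : (0:ℝ) < (k:ℝ) := by exact_mod_cast hk0
  -- m bounds
  have hmle : (m:ℝ) ≤ (L:ℝ)/k := by
    have h1 : ((L/k : ℕ):ℝ) ≤ (L:ℝ)/k := Nat.cast_div_le
    have h2 : m ≤ L/k := Nat.sub_le _ _
    calc (m:ℝ) ≤ ((L/k:ℕ):ℝ) := by exact_mod_cast h2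
      _ ≤ _ := h1
  have hmge : (L:ℝ)/k ≤ (m:ℝ) + 3 := by
    have h1 : L < k * (L/k) + k := by
      have := Nat.div_add_mod L k
      have := Nat.mod_lt L hk0
      omega
    have h2 : L/k = m + 2 := by omega
    rw [h2] at h1
    have h3 : (L:ℝ) < (k:ℝ) * ((m:ℝ) + 2) + k := by exact_mod_cast h1
    rw [div_le_iff₀ hkR]
    nlinarith
  have hm0 : (0:ℝ) ≤ (m:ℝ) := by positivity
  have h6 : 6 ≤ ε₀ * (m:ℝ) := by
    rw [div_le_iff₀ hε₀] at hm6; linarith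
  -- unfold badness
  rw [EpsKNormal] at hbad
  push_neg at hbad
  obtain ⟨w, hwlen, hwlt, hbadw⟩ := hbad
  rw [hlen] at hbadw
  -- the word's value
  have hs : Nat.ofDigits g w < g ^ k := by
    have := Nat.ofDigits_lt_base_pow_length hg1 hwlt
    rwa [hwlen] at this
  set s := Nat.ofDigits g w with hsdef
  have hmatch : ∀ j, ((∀ i < k, (Nat.digits g n).getD (j+i) 0 = w.getD i 0)
      ↔ n / g ^ j % g ^ k = s) := by
    intro j
    have h1 : ∀ i, (Nat.digits g n).getD (j+i) 0 = (n / g^j) / g^i % g := by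
      intro i
      rw [getD_digits hg, pow_add, ← Nat.div_div_eq_div_mul]
    constructor
    · intro h
      have h2 : ∀ i < w.length, (n / g^j) / g^i % g = w.getD i 0 := by
        intro i hi
        rw [← h1 i]
        exact h i (by omega)
      have := (match_iff hg w hwlt (n / g^j)).1 h2
      rwa [hwlen] at this
    · intro h i hi
      rw [h1 i]
      have h2 := (match_iff hg w hwlt (n / g^j)).2 (by rwa [hwlen])
      exact h2 i (by omega)
  -- nu as a Finset card
  set J := (Finset.range L).filter (fun j => j + k ≤ L ∧ n / g ^ j % g ^ k = s) with hJdef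
  have hnu : nu g n w = J.card := by
    rw [nu, ← Set.ncard_coe_finset]
    congr 1
    ext j
    simp only [hJdef, Finset.coe_filter, Set.mem_setOf_eq, Finset.mem_range, hlen, hwlen]
    constructor
    · rintro ⟨h1, h2⟩
      exact ⟨by omega, h1, (hmatch j).1 h2⟩
    · rintro ⟨h0, h1, h2⟩
      exact ⟨h1, (hmatch j).2 h2⟩
  have hfib : J.card = ∑ r ∈ Finset.range k, (J.filter (fun j => j % k = r)).card :=
    Finset.card_eq_sum_card_fiberwise (fun j _ => Finset.mem_range.mpr (Nat.mod_lt _ hk0))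
  have hmkL : m * k + 2 * k ≤ L := by
    have h3 : (L/k)*k ≤ L := Nat.div_mul_le_self L k
    have h4 : (m+2)*k = (L/k)*k := by rw [(show m + 2 = L/k by omega)]
    rw [Nat.add_mul] at h4
    omega
  -- block count vs fiber count
  have hcntle : ∀ r, r < k →
      ((Finset.univ : Finset (Fin m)).filter
        (fun i : Fin (L / k - 2) => n / g ^ (r + (i:ℕ) * k) % g ^ k = s)).card
      ≤ (J.filter (fun j => j % k = r)).card := by
    intro r hr
    apply Finset.card_le_card_of_injOn (fun i : Fin m => r + (i : ℕ) * k)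
    · intro i hi
      simp only [Finset.mem_coe, Finset.mem_filter, Finset.mem_univ, true_and] at hi
      have hi1 : (i:ℕ) + 1 ≤ m := i.isLt
      have hi2 : ((i:ℕ) + 1) * k ≤ m * k := Nat.mul_le_mul_right k hi1
      rw [Nat.add_mul] at hi2
      have hjk : r + (i:ℕ) * k + k ≤ L := by omega
      simp only [Finset.mem_coe, hJdef, Finset.mem_filter, Finset.mem_range]
      refine ⟨⟨by omega, hjk, hi⟩, ?_⟩
      rw [Nat.add_mul_mod_self_right, Nat.mod_eq_of_lt hr]
    · intro i _ i' _ he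
      simp only at he
      have : (i:ℕ) * k = (i':ℕ) * k := by omega
      exact Fin.ext (Nat.eq_of_mul_eq_mul_right hk0 this)
  have hcntge : ∀ r, r < k → (J.filter (fun j => j % k = r)).card ≤
      ((Finset.univ : Finset (Fin m)).filter
        (fun i : Fin (L / k - 2) => n / g ^ (r + (i:ℕ) * k) % g ^ k = s)).card + 2 := by
    intro r hr
    have hsub : J.filter (fun j => j % k = r) ⊆
        (((Finset.univ : Finset (Fin m)).filter
          (fun i : Fin (L / k - 2) => n / g ^ (r + (i:ℕ) * k) % g ^ k = s)).image (fun i : Fin m => r + (i:ℕ)*k))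
        ∪ ((Finset.Ico m (L/k)).image (fun t => r + t*k)) := by
      intro j hj
      simp only [hJdef, Finset.mem_filter, Finset.mem_range] at hj
      obtain ⟨⟨hjL, hjk, hjs⟩, hjr⟩ := hj
      have hco : k * (j / k) = (j / k) * k := Nat.mul_comm _ _
      have hdm := Nat.div_add_mod j k
      have hjt : j = r + (j / k) * k := by omega
      rcases Nat.lt_or_ge (j / k) m with htm | htm
      · apply Finset.mem_union_left
        apply Finset.mem_image.mpr
        refine ⟨⟨j / k, htm⟩, ?_, ?_⟩
        · simp only [Finset.mem_filter, Finset.mem_univ, true_and]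
          show n / g ^ (r + (j / k) * k) % g ^ k = s
          rw [← hjt]
          exact hjs
        · show r + (j / k) * k = j
          omega
      · apply Finset.mem_union_right
        apply Finset.mem_image.mpr
        refine ⟨j / k, Finset.mem_Ico.mpr ⟨htm, ?_⟩, hjt.symm⟩
        have h1 : (j / k + 1) * k ≤ L := by rw [Nat.add_mul]; omega
        have := (Nat.le_div_iff_mul_le hk0).mpr h1
        omega
    calc (J.filter (fun j => j % k = r)).card ≤ _ := Finset.card_le_card hsub
      _ ≤ _ := Finset.card_union_le _ _
      _ ≤ _ := by
          apply add_le_add Finset.card_image_le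
          refine le_trans Finset.card_image_le ?_
          rw [Nat.card_Ico]
          omega
  -- pigeonhole
  have hsumcast : (J.card : ℝ) = ∑ r ∈ Finset.range k, ((J.filter (fun j => j % k = r)).card : ℝ) := by
    rw [hfib]; push_cast; ring
  rcases le_or_gt ((nu g n w : ℝ)) ((P - ε) * L) with hlow | hC
  · -- lower tail
    have hlow₀ : (J.card : ℝ) ≤ (P - ε₀) * ((L:ℝ)/k) * k := by
      rw [hnu] at hlow
      have h1 : (P - ε) * L ≤ (P - ε₀) * L := by
        apply mul_le_mul_of_nonneg_right (by linarith) (by positivity)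
      have h2 : (P - ε₀) * ((L:ℝ)/k) * k = (P - ε₀) * L := by
        field_simp
      linarith
    have hex : ∃ r, r < k ∧ ((J.filter (fun j => j % k = r)).card : ℝ) ≤ (P - ε₀) * ((L:ℝ)/k) := by
      by_contra hcon
      push_neg at hcon
      have hlt : ∀ r ∈ Finset.range k, (P - ε₀) * ((L:ℝ)/k) <
          ((J.filter (fun j => j % k = r)).card : ℝ) := by
        intro r hrr; exact hcon r (Finset.mem_range.mp hrr)
      have := Finset.sum_lt_sum_of_nonempty (Finset.nonempty_range_iff.mpr (by omega)) hlt
      rw [Finset.sum_const, Finset.card_range, nsmul_eq_mul, ← hsumcast] at this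
      have : (P - ε₀) * ((L:ℝ)/k) * k < (J.card : ℝ) := by
        rw [mul_comm ((k:ℕ):ℝ) _] at this
        linarith
      linarith
    obtain ⟨r, hr, hJr⟩ := hex
    refine ⟨r, hr, s, hs, Or.inr ?_⟩
    have hcast : (((Finset.univ : Finset (Fin m)).filter
        (fun i : Fin (L / k - 2) => n / g ^ (r + (i:ℕ) * k) % g ^ k = s)).card : ℝ)
        ≤ ((J.filter (fun j => j % k = r)).card : ℝ) := by exact_mod_cast hcntle r hr
    have hPe0 : 0 ≤ P - ε₀ := by linarith
    have h2 : (P - ε₀) * ((L:ℝ)/k) ≤ (P - ε₀) * ((m:ℝ) + 3) :=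
      mul_le_mul_of_nonneg_left hmge hPe0
    have e2 : 3 ≤ (ε₀/2) * (m:ℝ) := by
      have : (ε₀/2) * (m:ℝ) = (ε₀ * m)/2 := by ring
      linarith
    have e3 : (P - ε₀) * ((m:ℝ) + 3) = (P - ε₀/2) * m - (ε₀/2) * m + 3*(P - ε₀) := by ring
    have e4 : 3*(P - ε₀) ≤ 3 := by linarith
    linarith
  · -- upper tail
    have hup := hbadw hC
    have hup₀ : (P + ε₀) * ((L:ℝ)/k) * k ≤ (J.card : ℝ) := by
      rw [hnu] at hup
      have h1 : (P + ε₀) * L ≤ (P + ε) * L := by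
        apply mul_le_mul_of_nonneg_right (by linarith) (by positivity)
      have h2 : (P + ε₀) * ((L:ℝ)/k) * k = (P + ε₀) * L := by
        field_simp
      linarith
    have hex : ∃ r, r < k ∧ (P + ε₀) * ((L:ℝ)/k) ≤ ((J.filter (fun j => j % k = r)).card : ℝ) := by
      by_contra hcon
      push_neg at hcon
      have hlt : ∀ r ∈ Finset.range k, ((J.filter (fun j => j % k = r)).card : ℝ) <
          (P + ε₀) * ((L:ℝ)/k) := by
        intro r hrr; exact hcon r (Finset.mem_range.mp hrr)
      have := Finset.sum_lt_sum_of_nonempty (Finset.nonempty_range_iff.mpr (by omega)) hlt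
      rw [Finset.sum_const, Finset.card_range, nsmul_eq_mul, ← hsumcast] at this
      have : (J.card : ℝ) < (P + ε₀) * ((L:ℝ)/k) * k := by
        rw [mul_comm ((k:ℕ):ℝ) _] at this
        linarith
      linarith
    obtain ⟨r, hr, hJr⟩ := hex
    refine ⟨r, hr, s, hs, Or.inl ?_⟩
    have hcast : ((J.filter (fun j => j % k = r)).card : ℝ)
        ≤ (((Finset.univ : Finset (Fin m)).filter
          (fun i : Fin (L / k - 2) => n / g ^ (r + (i:ℕ) * k) % g ^ k = s)).card : ℝ) + 2 := by
      exact_mod_cast hcntge r hr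
    have h2 : (P + ε₀) * (m:ℝ) ≤ (P + ε₀) * ((L:ℝ)/k) :=
      mul_le_mul_of_nonneg_left hmle (by linarith)
    have e2 : 3 ≤ (ε₀/2) * (m:ℝ) := by
      have : (ε₀/2) * (m:ℝ) = (ε₀ * m)/2 := by ring
      linarith
    have e1 : (P + ε₀) * (m:ℝ) = (P + ε₀/2) * m + (ε₀/2) * m := by ring
    linarith


lemma badvec_upper (G : ℕ) (hG : 2 ≤ G) (q : ℝ) (hq0 : 0 < q) (hq1 : 1 < (G:ℝ) * q) :
    ∃ ρ : ℝ, 0 ≤ ρ ∧ ρ < 1 ∧ ∀ (m s : ℕ), s < G →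
      ((((Fintype.piFinset (fun _ : Fin m => Finset.range G)).filter
        (fun b => q * m ≤ ((Finset.univ.filter (fun i => b i = s)).card : ℝ))).card : ℝ)
        ≤ (G:ℝ)^m * ρ^m) := by
  classical
  have hGR : (2:ℝ) ≤ (G:ℝ) := by exact_mod_cast hG
  obtain ⟨y, hy1, hy⟩ := exists_tilt_upper (G:ℝ) hGR q hq0 hq1
  have hy0 : (0:ℝ) < y := by linarith
  have hyq : (0:ℝ) < y ^ q := Real.rpow_pos_of_pos hy0 q
  have hden : (0:ℝ) < (G:ℝ) * y ^ q := by positivity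
  refine ⟨(y + ((G:ℝ) - 1)) / ((G:ℝ) * y ^ q),
    div_nonneg (by linarith) (le_of_lt hden), ?_, ?_⟩
  · rw [div_lt_one hden]; linarith
  · intro m s hs
    have hch := chernoff_upper G m s hs y (le_of_lt hy1) (q * m)
    have hexp : y ^ (q * (m:ℝ)) = (y ^ q) ^ m := by
      rw [Real.rpow_mul (le_of_lt hy0), Real.rpow_natCast]
    rw [hexp] at hch
    have hrhs : (y + ((G:ℝ) - 1)) ^ m
        = ((G:ℝ)^m * ((y + ((G:ℝ) - 1)) / ((G:ℝ) * y ^ q))^m) * (y ^ q) ^ m := by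
      rw [← mul_pow, ← mul_pow]
      congr 1
      field_simp
    rw [hrhs] at hch
    have hpos : (0:ℝ) < (y ^ q) ^ m := by positivity
    exact le_of_mul_le_mul_right hch hpos

lemma badvec_lower (G : ℕ) (hG : 2 ≤ G) (q : ℝ) (hq0 : 0 < q) (hq1 : (G:ℝ) * q < 1) :
    ∃ ρ : ℝ, 0 ≤ ρ ∧ ρ < 1 ∧ ∀ (m s : ℕ), s < G →
      ((((Fintype.piFinset (fun _ : Fin m => Finset.range G)).filter
        (fun b => ((Finset.univ.filter (fun i => b i = s)).card : ℝ) ≤ q * m)).card : ℝ)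
        ≤ (G:ℝ)^m * ρ^m) := by
  classical
  have hGR : (2:ℝ) ≤ (G:ℝ) := by exact_mod_cast hG
  obtain ⟨y, hy0, hy1, hy⟩ := exists_tilt_lower (G:ℝ) hGR q hq0 hq1
  have hyq : (0:ℝ) < y ^ q := Real.rpow_pos_of_pos hy0 q
  have hden : (0:ℝ) < (G:ℝ) * y ^ q := by positivity
  refine ⟨(y + ((G:ℝ) - 1)) / ((G:ℝ) * y ^ q),
    div_nonneg (by linarith) (le_of_lt hden), ?_, ?_⟩
  · rw [div_lt_one hden]; linarith
  · intro m s hs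
    have hch := chernoff_lower G m s hs y hy0 (le_of_lt hy1) (q * m)
    have hexp : y ^ (q * (m:ℝ)) = (y ^ q) ^ m := by
      rw [Real.rpow_mul (le_of_lt hy0), Real.rpow_natCast]
    rw [hexp] at hch
    have hrhs : (y + ((G:ℝ) - 1)) ^ m
        = ((G:ℝ)^m * ((y + ((G:ℝ) - 1)) / ((G:ℝ) * y ^ q))^m) * (y ^ q) ^ m := by
      rw [← mul_pow, ← mul_pow]
      congr 1
      field_simp
    rw [hrhs] at hch
    have hpos : (0:ℝ) < (y ^ q) ^ m := by positivity
    exact le_of_mul_le_mul_right hch hpos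

lemma card_filter_block_le' {g : ℕ} (hg : 2 ≤ g) (L r m k : ℕ)
    (hrm : r + m * k ≤ L) (Q : ℕ → Prop) (P : (Fin m → ℕ) → Prop)
    [DecidablePred Q] [DecidablePred P]
    (hQP : ∀ n, Q n ↔ P (fun i : Fin m => n / g ^ (r + (i:ℕ) * k) % g ^ k)) :
    ((Finset.range (g ^ L)).filter Q).card
      ≤ ((Fintype.piFinset fun _ : Fin m => Finset.range (g ^ k)).filter P).card
        * g ^ (L - m * k) := by
  classical
  have he : (Finset.range (g ^ L)).filter Q
      = (Finset.range (g ^ L)).filter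
        (fun n => P (fun i : Fin m => n / g ^ (r + (i:ℕ) * k) % g ^ k)) := by
    apply Finset.filter_congr
    intro n _
    exact (hQP n)
  rw [he]
  have := card_filter_block_le hg L r m k hrm P
  convert this using 2

open scoped Classical in
lemma badcount_length {g k : ℕ} (hg : 2 ≤ g) (hk : 1 ≤ k) {ε ε₀ : ℝ}
    (hε₀ : 0 < ε₀) (hε₀ε : ε₀ ≤ ε) (hε₀p : ε₀ ≤ ((g:ℝ)^k)⁻¹ / 2)
    {ρ : ℝ} (hρ0 : 0 ≤ ρ)
    (hU : ∀ (m s : ℕ), s < g^k →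
      ((((Fintype.piFinset (fun _ : Fin m => Finset.range (g^k))).filter
        (fun b => (((g:ℝ)^k)⁻¹ + ε₀/2) * m ≤ ((Finset.univ.filter (fun i => b i = s)).card : ℝ))).card : ℝ)
        ≤ ((g^k : ℕ):ℝ)^m * ρ^m))
    (hLo : ∀ (m s : ℕ), s < g^k →
      ((((Fintype.piFinset (fun _ : Fin m => Finset.range (g^k))).filter
        (fun b => ((Finset.univ.filter (fun i => b i = s)).card : ℝ) ≤ (((g:ℝ)^k)⁻¹ - ε₀/2) * m)).card : ℝ)
        ≤ ((g^k : ℕ):ℝ)^m * ρ^m))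
    (L : ℕ) (hLk : 2 ≤ L / k) (hm6 : 6 / ε₀ ≤ ((L / k - 2 : ℕ) : ℝ)) :
    (((Finset.range (g^L)).filter
      (fun n => (Nat.digits g n).length = L ∧ ¬ EpsKNormal g ε k n)).card : ℝ)
    ≤ 2 * (k:ℝ) * ((g:ℝ)^k) * (g:ℝ)^L * ρ^(L/k - 2) := by
  classical
  set m := L / k - 2 with hmdef
  have hk0 : 0 < k := hk
  have hmkL : m * k + 2 * k ≤ L := by
    have h3 : (L/k)*k ≤ L := Nat.div_mul_le_self L k
    have h4 : (m+2)*k = (L/k)*k := by rw [(show m + 2 = L/k by omega)]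
    rw [Nat.add_mul] at h4
    omega
  -- the two bad finsets
  set Bu : ℕ → ℕ → Finset ℕ := fun r s => (Finset.range (g^L)).filter
    (fun n => (((g:ℝ)^k)⁻¹ + ε₀/2) * (m:ℝ)
      ≤ (((Finset.univ : Finset (Fin m)).filter
          (fun i : Fin m => n / g ^ (r + (i:ℕ) * k) % g ^ k = s)).card : ℝ)) with hBu
  set Bl : ℕ → ℕ → Finset ℕ := fun r s => (Finset.range (g^L)).filter
    (fun n => (((Finset.univ : Finset (Fin m)).filter
          (fun i : Fin m => n / g ^ (r + (i:ℕ) * k) % g ^ k = s)).card : ℝ)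
      ≤ (((g:ℝ)^k)⁻¹ - ε₀/2) * (m:ℝ)) with hBl
  have hsub : (Finset.range (g^L)).filter
      (fun n => (Nat.digits g n).length = L ∧ ¬ EpsKNormal g ε k n)
      ⊆ (Finset.range k).biUnion (fun r => (Finset.range (g^k)).biUnion
          (fun s => Bu r s ∪ Bl r s)) := by
    intro n hn
    rw [Finset.mem_filter] at hn
    obtain ⟨hn1, hlen, hbad⟩ := hn
    obtain ⟨r, hr, s, hs, hcase⟩ := reduction hg hk hε₀ hε₀ε hε₀p hLk hm6 hlen hbad
    rw [Finset.mem_biUnion]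
    refine ⟨r, Finset.mem_range.mpr hr, ?_⟩
    rw [Finset.mem_biUnion]
    refine ⟨s, Finset.mem_range.mpr hs, ?_⟩
    rw [Finset.mem_union]
    rcases hcase with hcase | hcase
    · exact Or.inl (Finset.mem_filter.mpr ⟨hn1, hcase⟩)
    · exact Or.inr (Finset.mem_filter.mpr ⟨hn1, hcase⟩)
  -- per (r,s) bound
  have hperU : ∀ r < k, ∀ s < g^k, ((Bu r s).card : ℝ)
      ≤ ((g^k : ℕ):ℝ)^m * ρ^m * (g:ℝ)^(L - m*k) := by
    intro r hr s hs
    have hrm : r + m * k ≤ L := by omega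
    have hone := card_filter_block_le' hg L r m k hrm _
      (fun b : Fin m → ℕ => (((g:ℝ)^k)⁻¹ + ε₀/2) * (m:ℝ)
        ≤ ((Finset.univ.filter (fun i => b i = s)).card : ℝ))
      (fun n => Iff.rfl)
    have h2 := hU m s hs
    calc ((Bu r s).card : ℝ) ≤
        ((((Fintype.piFinset (fun _ : Fin m => Finset.range (g^k))).filter
          (fun b => (((g:ℝ)^k)⁻¹ + ε₀/2) * (m:ℝ) ≤ ((Finset.univ.filter (fun i => b i = s)).card : ℝ))).card : ℝ))
          * (g:ℝ)^(L - m*k) := by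
          rw [hBu]
          push_cast
          exact_mod_cast Nat.cast_le.mpr hone |>.trans (le_of_eq (by push_cast; ring))
      _ ≤ ((g^k : ℕ):ℝ)^m * ρ^m * (g:ℝ)^(L - m*k) := by
          apply mul_le_mul_of_nonneg_right h2 (by positivity)
  have hperL : ∀ r < k, ∀ s < g^k, ((Bl r s).card : ℝ)
      ≤ ((g^k : ℕ):ℝ)^m * ρ^m * (g:ℝ)^(L - m*k) := by
    intro r hr s hs
    have hrm : r + m * k ≤ L := by omega
    have hone := card_filter_block_le' hg L r m k hrm _
      (fun b : Fin m → ℕ => ((Finset.univ.filter (fun i => b i = s)).card : ℝ)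
        ≤ (((g:ℝ)^k)⁻¹ - ε₀/2) * (m:ℝ))
      (fun n => Iff.rfl)
    have h2 := hLo m s hs
    calc ((Bl r s).card : ℝ) ≤
        ((((Fintype.piFinset (fun _ : Fin m => Finset.range (g^k))).filter
          (fun b => ((Finset.univ.filter (fun i => b i = s)).card : ℝ) ≤ (((g:ℝ)^k)⁻¹ - ε₀/2) * (m:ℝ))).card : ℝ))
          * (g:ℝ)^(L - m*k) := by
          rw [hBl]
          push_cast
          exact_mod_cast Nat.cast_le.mpr hone |>.trans (le_of_eq (by push_cast; ring))
      _ ≤ ((g^k : ℕ):ℝ)^m * ρ^m * (g:ℝ)^(L - m*k) := by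
          apply mul_le_mul_of_nonneg_right h2 (by positivity)
  -- sum up
  have hcard1 : (((Finset.range (g^L)).filter
      (fun n => (Nat.digits g n).length = L ∧ ¬ EpsKNormal g ε k n)).card : ℝ)
      ≤ ∑ r ∈ Finset.range k, ∑ s ∈ Finset.range (g^k),
          (((Bu r s).card : ℝ) + ((Bl r s).card : ℝ)) := by
    have h1 := Finset.card_le_card hsub
    have h2 := Finset.card_biUnion_le (s := Finset.range k)
      (t := fun r => (Finset.range (g^k)).biUnion (fun s => Bu r s ∪ Bl r s))
    have h3 : ∀ r, ((Finset.range (g^k)).biUnion (fun s => Bu r s ∪ Bl r s)).card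
        ≤ ∑ s ∈ Finset.range (g^k), ((Bu r s).card + (Bl r s).card) := by
      intro r
      refine le_trans Finset.card_biUnion_le ?_
      exact Finset.sum_le_sum (fun s _ => Finset.card_union_le _ _)
    have h4 : ((Finset.range (g^L)).filter
        (fun n => (Nat.digits g n).length = L ∧ ¬ EpsKNormal g ε k n)).card
        ≤ ∑ r ∈ Finset.range k, ∑ s ∈ Finset.range (g^k), ((Bu r s).card + (Bl r s).card) :=
      le_trans h1 (le_trans h2 (Finset.sum_le_sum (fun r _ => h3 r)))
    calc (((Finset.range (g^L)).filter
        (fun n => (Nat.digits g n).length = L ∧ ¬ EpsKNormal g ε k n)).card : ℝ)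
        ≤ ((∑ r ∈ Finset.range k, ∑ s ∈ Finset.range (g^k),
          ((Bu r s).card + (Bl r s).card) : ℕ) : ℝ) := by exact_mod_cast h4
      _ = _ := by push_cast; ring
  have hcard2 : ∑ r ∈ Finset.range k, ∑ s ∈ Finset.range (g^k),
      (((Bu r s).card : ℝ) + ((Bl r s).card : ℝ))
      ≤ (k:ℝ) * (g:ℝ)^k * (2 * (((g^k : ℕ):ℝ)^m * ρ^m * (g:ℝ)^(L - m*k))) := by
    calc ∑ r ∈ Finset.range k, ∑ s ∈ Finset.range (g^k),
        (((Bu r s).card : ℝ) + ((Bl r s).card : ℝ))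
        ≤ ∑ r ∈ Finset.range k, ∑ s ∈ Finset.range (g^k),
          (2 * (((g^k : ℕ):ℝ)^m * ρ^m * (g:ℝ)^(L - m*k))) := by
          apply Finset.sum_le_sum
          intro r hr
          apply Finset.sum_le_sum
          intro s hs
          have := hperU r (Finset.mem_range.mp hr) s (Finset.mem_range.mp hs)
          have := hperL r (Finset.mem_range.mp hr) s (Finset.mem_range.mp hs)
          linarith
      _ = (k:ℝ) * ((g^k:ℕ):ℝ) * (2 * (((g^k : ℕ):ℝ)^m * ρ^m * (g:ℝ)^(L - m*k))) := by
          rw [Finset.sum_const, Finset.sum_const, Finset.card_range, Finset.card_range]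
          push_cast
          ring
      _ = _ := by push_cast; ring
  have hpow : ((g^k : ℕ):ℝ)^m * (g:ℝ)^(L - m*k) = (g:ℝ)^L := by
    push_cast
    rw [← pow_mul, ← pow_add]
    congr 1
    have : k * m = m * k := Nat.mul_comm _ _
    omega
  calc (((Finset.range (g^L)).filter
      (fun n => (Nat.digits g n).length = L ∧ ¬ EpsKNormal g ε k n)).card : ℝ)
      ≤ _ := hcard1
    _ ≤ _ := hcard2
    _ = 2 * (k:ℝ) * ((g:ℝ)^k) * (((g^k : ℕ):ℝ)^m * (g:ℝ)^(L - m*k)) * ρ^m := by ring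
    _ = 2 * (k:ℝ) * ((g:ℝ)^k) * (g:ℝ)^L * ρ^(L/k - 2) := by rw [hpow]

set_option maxHeartbeats 2000000 in
theorem stmt3 (g : ℕ) (hg : 2 ≤ g) (ε : ℝ) (hε : 0 < ε) (k : ℕ) (hk : 1 ≤ k) :
    ∃ δ : ℝ, δ < 1 ∧ ∃ x₀ : ℝ, ∀ x : ℝ, x > x₀ →
      (countIn {n : ℕ | ¬ EpsKNormal g ε k n} x : ℝ) < x ^ δ := by
  classical
  have hg1 : 1 < g := by omega
  have hgR : (2:ℝ) ≤ (g:ℝ) := by exact_mod_cast hg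
  have hk0 : 0 < k := hk
  have hkR : (0:ℝ) < (k:ℝ) := by exact_mod_cast hk0
  set P : ℝ := ((g:ℝ)^k)⁻¹ with hPdef
  have hgkpos : (0:ℝ) < (g:ℝ)^k := by positivity
  have hP0 : 0 < P := by rw [hPdef]; positivity
  set ε₀ : ℝ := min ε (P/2) with hε₀def
  have hε₀ : 0 < ε₀ := lt_min hε (by positivity)
  have hε₀ε : ε₀ ≤ ε := min_le_left _ _
  have hε₀p : ε₀ ≤ P/2 := min_le_right _ _
  have hG2 : 2 ≤ g ^ k := le_trans hg (Nat.le_self_pow (by omega) g)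
  have hGcast : ((g^k : ℕ):ℝ) = (g:ℝ)^k := by push_cast; ring
  have hGP : (g:ℝ)^k * P = 1 := mul_inv_cancel₀ (ne_of_gt hgkpos)
  obtain ⟨ρU, hρU0, hρU1, hU⟩ := badvec_upper (g^k) hG2 (P + ε₀/2) (by positivity)
    (by rw [hGcast]; nlinarith [mul_pos hgkpos (by linarith : (0:ℝ) < ε₀/2)])
  obtain ⟨ρL, hρL0, hρL1, hLo⟩ := badvec_lower (g^k) hG2 (P - ε₀/2)
    (by linarith) (by rw [hGcast]; nlinarith [mul_pos hgkpos (by linarith : (0:ℝ) < ε₀/2)])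
  set ρ : ℝ := max (max ρU ρL) (3/4) with hρdef
  have hρ1 : ρ < 1 := max_lt (max_lt hρU1 hρL1) (by norm_num)
  have hρ34 : (3/4:ℝ) ≤ ρ := le_max_right _ _
  have hρ0 : (0:ℝ) < ρ := by linarith
  have hρle1 : ρ ≤ 1 := le_of_lt hρ1
  have hU' : ∀ (m s : ℕ), s < g^k →
      ((((Fintype.piFinset (fun _ : Fin m => Finset.range (g^k))).filter
        (fun b => (((g:ℝ)^k)⁻¹ + ε₀/2) * m ≤ ((Finset.univ.filter (fun i => b i = s)).card : ℝ))).card : ℝ)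
        ≤ ((g^k : ℕ):ℝ)^m * ρ^m) := by
    intro m s hs
    refine le_trans (hU m s hs) ?_
    apply mul_le_mul_of_nonneg_left
      (pow_le_pow_left₀ hρU0 (le_trans (le_max_left _ _) (le_max_left _ _)) m)
      (by positivity)
  have hLo' : ∀ (m s : ℕ), s < g^k →
      ((((Fintype.piFinset (fun _ : Fin m => Finset.range (g^k))).filter
        (fun b => ((Finset.univ.filter (fun i => b i = s)).card : ℝ) ≤ (((g:ℝ)^k)⁻¹ - ε₀/2) * m)).card : ℝ)
        ≤ ((g^k : ℕ):ℝ)^m * ρ^m) := by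
    intro m s hs
    refine le_trans (hLo m s hs) ?_
    apply mul_le_mul_of_nonneg_left
      (pow_le_pow_left₀ hρL0 (le_trans (le_max_right _ _) (le_max_left _ _)) m)
      (by positivity)
  -- geometric base
  set β : ℝ := (g:ℝ) * ρ ^ ((1:ℝ)/k) with hβdef
  have hρ1k_pos : 0 < ρ ^ ((1:ℝ)/k) := Real.rpow_pos_of_pos hρ0 _
  have hρ1k_le1 : ρ ^ ((1:ℝ)/k) ≤ 1 :=
    Real.rpow_le_one (le_of_lt hρ0) hρle1 (by positivity)
  have hρ1k_ge : ρ ≤ ρ ^ ((1:ℝ)/k) := by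
    have h1 : (1:ℝ)/k ≤ 1 := by
      rw [div_le_one hkR]; exact_mod_cast hk
    have := Real.rpow_le_rpow_of_exponent_ge hρ0 hρle1 h1
    simpa using this
  have hβ32 : (3:ℝ)/2 ≤ β := by
    have h1 : 2 * (3/4 : ℝ) ≤ (g:ℝ) * ρ ^ ((1:ℝ)/k) :=
      mul_le_mul hgR (le_trans hρ34 hρ1k_ge) (by norm_num) (by linarith)
    rw [hβdef]; linarith
  have hβg : β ≤ (g:ℝ) := by
    have := mul_le_mul_of_nonneg_left hρ1k_le1 (by linarith : (0:ℝ) ≤ (g:ℝ))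
    rw [hβdef]; simpa using this
  have hβ0 : (0:ℝ) < β := by linarith
  -- rpow-pow conversion
  have hbl : ∀ (t : ℝ) (L : ℕ), (ρ^(t/k))^L = ρ^(t*(L:ℝ)/k) := by
    intro t L
    rw [← Real.rpow_natCast (ρ^(t/k)) L, ← Real.rpow_mul (le_of_lt hρ0)]
    congr 1; ring
  -- constants
  set L₁ : ℕ := k * (⌈6/ε₀⌉₊ + 3) with hL₁def
  set C₂ : ℝ := 2*(k:ℝ)*((g:ℝ)^k) * ρ^(-(3:ℝ)) + (ρ^(-(1:ℝ)/k))^L₁ with hC₂def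
  have hρm3pos : (0:ℝ) < ρ^(-(3:ℝ)) := Real.rpow_pos_of_pos hρ0 _
  have hρm1kpos : (0:ℝ) < ρ^(-(1:ℝ)/k) := Real.rpow_pos_of_pos hρ0 _
  have hC₂pos : 0 < C₂ := by
    rw [hC₂def]
    have h1 : 0 < 2*(k:ℝ)*((g:ℝ)^k) * ρ^(-(3:ℝ)) := by positivity
    have h2 : 0 < (ρ^(-(1:ℝ)/k))^L₁ := pow_pos hρm1kpos _
    linarith
  -- per-length uniform bound
  have hperL : ∀ L : ℕ, (((Finset.range (g^L)).filter
      (fun n => (Nat.digits g n).length = L ∧ ¬ EpsKNormal g ε k n)).card : ℝ) ≤ C₂ * β^L := by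
    intro L
    have hβLpos : (0:ℝ) < β^L := pow_pos hβ0 _
    have hβLexp : β^L = (g:ℝ)^L * (ρ^((1:ℝ)/k))^L := by rw [hβdef, mul_pow]
    rcases lt_or_ge L L₁ with hL | hL
    · -- trivial regime
      have h1 : (((Finset.range (g^L)).filter
          (fun n => (Nat.digits g n).length = L ∧ ¬ EpsKNormal g ε k n)).card : ℝ)
          ≤ (g:ℝ)^L := by
        have h2 := Finset.card_filter_le (Finset.range (g^L))
          (fun n => (Nat.digits g n).length = L ∧ ¬ EpsKNormal g ε k n)
        rw [Finset.card_range] at h2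
        calc (((Finset.range (g^L)).filter
            (fun n => (Nat.digits g n).length = L ∧ ¬ EpsKNormal g ε k n)).card : ℝ)
            ≤ ((g^L : ℕ) : ℝ) := by exact_mod_cast h2
          _ = (g:ℝ)^L := by push_cast; ring
      have hone : (1:ℝ) ≤ (ρ^(-(1:ℝ)/k))^L₁ * (ρ^((1:ℝ)/k))^L := by
        rw [hbl (-(1:ℝ)) L₁, hbl 1 L]
        rw [← Real.rpow_add hρ0]
        have hexp : (-(1:ℝ))*(L₁:ℝ)/k + 1*(L:ℝ)/k ≤ 0 := by
          have : (L:ℝ) ≤ (L₁:ℝ) := by exact_mod_cast le_of_lt hL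
          rw [← add_div, div_nonpos_iff]
          right
          constructor
          · nlinarith
          · positivity
        have := Real.rpow_le_rpow_of_exponent_ge hρ0 hρle1 hexp
        simpa using this
      calc (((Finset.range (g^L)).filter
          (fun n => (Nat.digits g n).length = L ∧ ¬ EpsKNormal g ε k n)).card : ℝ)
          ≤ (g:ℝ)^L := h1
        _ ≤ (g:ℝ)^L * ((ρ^(-(1:ℝ)/k))^L₁ * (ρ^((1:ℝ)/k))^L) :=
            le_mul_of_one_le_right (by positivity) hone
        _ = (ρ^(-(1:ℝ)/k))^L₁ * β^L := by rw [hβLexp]; ring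
        _ ≤ C₂ * β^L := by
            apply mul_le_mul_of_nonneg_right _ (le_of_lt hβLpos)
            rw [hC₂def]
            have : 0 < 2*(k:ℝ)*((g:ℝ)^k) * ρ^(-(3:ℝ)) := by positivity
            linarith
    · -- main regime
      have hLk : 2 ≤ L / k := by
        have h1 : (⌈6/ε₀⌉₊ + 3) * k ≤ L := by rw [mul_comm]; exact hL
        have := (Nat.le_div_iff_mul_le hk0).mpr h1
        omega
      have hLk3 : ⌈6/ε₀⌉₊ + 3 ≤ L / k := by
        have h1 : (⌈6/ε₀⌉₊ + 3) * k ≤ L := by rw [mul_comm]; exact hL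
        exact (Nat.le_div_iff_mul_le hk0).mpr h1
      have hm6 : 6 / ε₀ ≤ ((L / k - 2 : ℕ) : ℝ) := by
        have h1 : 6/ε₀ ≤ (⌈6/ε₀⌉₊ : ℝ) := Nat.le_ceil _
        have h2 : ⌈6/ε₀⌉₊ ≤ L/k - 2 := by omega
        have h3 : ((⌈6/ε₀⌉₊ : ℕ) : ℝ) ≤ ((L/k - 2 : ℕ) : ℝ) := by exact_mod_cast h2
        linarith
      have hmain := badcount_length hg hk hε₀ hε₀ε
        (by rw [← hPdef]; exact hε₀p) (le_of_lt hρ0) hU' hLo' L hLk hm6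
      have htail : ρ^(L/k - 2) ≤ ρ^(-(3:ℝ)) * (ρ^((1:ℝ)/k))^L := by
        rw [hbl 1 L, ← Real.rpow_natCast ρ (L/k - 2), ← Real.rpow_add hρ0]
        apply Real.rpow_le_rpow_of_exponent_ge hρ0 hρle1
        have hcast : ((L/k - 2 : ℕ):ℝ) = ((L/k : ℕ):ℝ) - 2 := by
          have : (2:ℕ) ≤ L/k := hLk
          push_cast [Nat.cast_sub this]
          ring
        have hdiv : (L:ℝ)/k < ((L/k : ℕ):ℝ) + 1 := by
          have h1 : L < k * (L/k) + k := by
            have := Nat.div_add_mod L k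
            have := Nat.mod_lt L hk0
            omega
          have h2 : (L:ℝ) < (k:ℝ) * ((L/k:ℕ):ℝ) + k := by exact_mod_cast h1
          rw [div_lt_iff₀ hkR]
          nlinarith
        rw [hcast]
        have : 1*(L:ℝ)/k = (L:ℝ)/k := by ring
        rw [this]
        linarith
      calc (((Finset.range (g^L)).filter
          (fun n => (Nat.digits g n).length = L ∧ ¬ EpsKNormal g ε k n)).card : ℝ)
          ≤ 2 * (k:ℝ) * ((g:ℝ)^k) * (g:ℝ)^L * ρ^(L/k - 2) := hmain
        _ ≤ 2 * (k:ℝ) * ((g:ℝ)^k) * (g:ℝ)^L * (ρ^(-(3:ℝ)) * (ρ^((1:ℝ)/k))^L) := by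
            apply mul_le_mul_of_nonneg_left htail (by positivity)
        _ = (2*(k:ℝ)*((g:ℝ)^k) * ρ^(-(3:ℝ))) * β^L := by rw [hβLexp]; ring
        _ ≤ C₂ * β^L := by
            apply mul_le_mul_of_nonneg_right _ (le_of_lt hβLpos)
            rw [hC₂def]
            have h2 : 0 < (ρ^(-(1:ℝ)/k))^L₁ := pow_pos hρm1kpos _
            linarith
  -- exponents
  have hlogg : 0 < Real.log g := Real.log_pos (by exact_mod_cast hg1)
  have hlogρ : Real.log ρ < 0 := Real.log_neg hρ0 hρ1
  set c : ℝ := (-Real.log ρ)/((k:ℝ) * Real.log g) with hcdef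
  have hc0 : 0 < c := div_pos (by linarith) (by positivity)
  set δ : ℝ := 1 - (min c 1)/2 with hδdef
  have hmin0 : 0 < min c 1 := lt_min hc0 one_pos
  have hδ1 : δ < 1 := by rw [hδdef]; linarith
  refine ⟨δ, hδ1, ?_⟩
  set C₃ : ℝ := 2 * C₂ * g * g with hC₃def
  have hC₃0 : 0 < C₃ := by rw [hC₃def]; positivity
  -- the main bound, for every x ≥ 1
  have hmainx : ∀ x : ℝ, 1 ≤ x →
      (countIn {n : ℕ | ¬ EpsKNormal g ε k n} x : ℝ) ≤ C₃ * x^(1-c) := by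
    intro x hx1
    have hx0 : (0:ℝ) < x := by linarith
    set M := ⌊x⌋₊ with hMdef
    have hM1 : 1 ≤ M := Nat.le_floor (by exact_mod_cast hx1)
    set Lmax := (Nat.digits g M).length with hLmaxdef
    have hcount : (countIn {n : ℕ | ¬ EpsKNormal g ε k n} x : ℝ) ≤
        ∑ L ∈ Finset.range (Lmax+1), (((Finset.range (g^L)).filter
          (fun n => (Nat.digits g n).length = L ∧ ¬ EpsKNormal g ε k n)).card : ℝ) := by
      have hsub : {n : ℕ | 0 < n ∧ (n:ℝ) ≤ x ∧ n ∈ {n : ℕ | ¬ EpsKNormal g ε k n}} ⊆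
          ↑((Finset.range (Lmax+1)).biUnion (fun L => (Finset.range (g^L)).filter
            (fun n => (Nat.digits g n).length = L ∧ ¬ EpsKNormal g ε k n))) := by
        intro n hn
        obtain ⟨hn0, hnx, hnbad⟩ := hn
        have hnM : n ≤ M := Nat.le_floor hnx
        have hlen_le : (Nat.digits g n).length ≤ Lmax := Nat.le_digits_len_le g n M hnM
        apply Finset.mem_coe.mpr
        apply Finset.mem_biUnion.mpr
        exact ⟨(Nat.digits g n).length, Finset.mem_range.mpr (by omega),
          Finset.mem_filter.mpr ⟨Finset.mem_range.mpr (Nat.lt_base_pow_length_digits hg1),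
            rfl, hnbad⟩⟩
      have h1 : countIn {n : ℕ | ¬ EpsKNormal g ε k n} x ≤
          ((Finset.range (Lmax+1)).biUnion (fun L => (Finset.range (g^L)).filter
            (fun n => (Nat.digits g n).length = L ∧ ¬ EpsKNormal g ε k n))).card := by
        rw [countIn, ← Set.ncard_coe_finset]
        exact Set.ncard_le_ncard hsub (Finset.finite_toSet _)
      have h2 := Finset.card_biUnion_le (s := Finset.range (Lmax+1))
        (t := fun L => (Finset.range (g^L)).filter
          (fun n => (Nat.digits g n).length = L ∧ ¬ EpsKNormal g ε k n))
      calc (countIn {n : ℕ | ¬ EpsKNormal g ε k n} x : ℝ)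
          ≤ ((∑ L ∈ Finset.range (Lmax+1), ((Finset.range (g^L)).filter
            (fun n => (Nat.digits g n).length = L ∧ ¬ EpsKNormal g ε k n)).card : ℕ) : ℝ) := by
            exact_mod_cast le_trans h1 h2
        _ = _ := by push_cast; ring
    have hsum2 : ∑ L ∈ Finset.range (Lmax+1), (((Finset.range (g^L)).filter
          (fun n => (Nat.digits g n).length = L ∧ ¬ EpsKNormal g ε k n)).card : ℝ)
        ≤ 2 * C₂ * β^(Lmax+1) := by
      calc ∑ L ∈ Finset.range (Lmax+1), (((Finset.range (g^L)).filter
            (fun n => (Nat.digits g n).length = L ∧ ¬ EpsKNormal g ε k n)).card : ℝ)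
          ≤ ∑ L ∈ Finset.range (Lmax+1), C₂ * β^L :=
            Finset.sum_le_sum (fun L _ => hperL L)
        _ = C₂ * ∑ L ∈ Finset.range (Lmax+1), β^L := by rw [Finset.mul_sum]
        _ ≤ 2 * C₂ * β^(Lmax+1) := by
            rw [geom_sum_eq (by linarith : β ≠ 1) (Lmax+1)]
            have hβp : (0:ℝ) < β^(Lmax+1) := pow_pos hβ0 _
            have hd : (β^(Lmax+1) - 1)/(β-1) ≤ 2*β^(Lmax+1) := by
              rw [div_le_iff₀ (by linarith : (0:ℝ) < β - 1)]
              nlinarith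
            calc C₂ * ((β^(Lmax+1) - 1)/(β-1)) ≤ C₂ * (2*β^(Lmax+1)) :=
                mul_le_mul_of_nonneg_left hd (le_of_lt hC₂pos)
              _ = 2 * C₂ * β^(Lmax+1) := by ring
    -- bound β^(Lmax+1)
    have hgLmax : ((g:ℝ))^Lmax ≤ (g:ℝ) * x := by
      have h1 : g ^ Lmax ≤ g * M := Nat.base_pow_length_digits_le g M hg1 (by omega)
      have h2 : (M:ℝ) ≤ x := Nat.floor_le (le_of_lt hx0)
      calc ((g:ℝ))^Lmax = ((g^Lmax : ℕ):ℝ) := by push_cast; ring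
        _ ≤ ((g*M : ℕ):ℝ) := by exact_mod_cast h1
        _ = (g:ℝ) * (M:ℝ) := by push_cast; ring
        _ ≤ (g:ℝ) * x := by nlinarith
    have hxle : x ≤ (g:ℝ)^Lmax := by
      have h1 : M < g ^ Lmax := Nat.lt_base_pow_length_digits hg1
      have h2 : x < (M:ℝ) + 1 := Nat.lt_floor_add_one x
      have h3 : (M:ℝ) + 1 ≤ ((g^Lmax : ℕ):ℝ) := by exact_mod_cast h1
      have h4 : ((g^Lmax : ℕ):ℝ) = (g:ℝ)^Lmax := by push_cast; ring
      linarith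
    have hLmaxlog : Real.log x / Real.log g ≤ (Lmax:ℝ) := by
      rw [div_le_iff₀ hlogg]
      have h1 : Real.log x ≤ Real.log ((g:ℝ)^Lmax) := Real.log_le_log hx0 hxle
      rw [Real.log_pow] at h1
      exact_mod_cast h1
    have hρx : (ρ^((1:ℝ)/k))^Lmax ≤ x^(-c) := by
      rw [hbl 1 Lmax]
      have hexp : Real.log x/((k:ℝ)*Real.log g) ≤ 1*(Lmax:ℝ)/k := by
        have h1 : Real.log x/((k:ℝ)*Real.log g) = (Real.log x / Real.log g)/k := by
          rw [div_div, mul_comm]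
        have h2 : (Real.log x / Real.log g)/k ≤ (Lmax:ℝ)/k :=
          (div_le_div_iff_of_pos_right hkR).mpr hLmaxlog
        rw [h1]
        calc (Real.log x / Real.log g)/k ≤ (Lmax:ℝ)/k := h2
          _ = 1*(Lmax:ℝ)/k := by ring
      calc ρ^(1*(Lmax:ℝ)/k) ≤ ρ^(Real.log x/((k:ℝ)*Real.log g)) :=
          Real.rpow_le_rpow_of_exponent_ge hρ0 hρle1 hexp
        _ = x^(-c) := by
            rw [Real.rpow_def_of_pos hρ0, Real.rpow_def_of_pos hx0]
            congr 1
            rw [hcdef]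
            field_simp
    have hβfinal : β^(Lmax+1) ≤ (g:ℝ) * (((g:ℝ) * x) * x^(-c)) := by
      have h1 : β^(Lmax+1) = β * β^Lmax := by rw [pow_succ]; ring
      have h2 : β^Lmax = (g:ℝ)^Lmax * (ρ^((1:ℝ)/k))^Lmax := by rw [hβdef, mul_pow]
      have h3 : (g:ℝ)^Lmax * (ρ^((1:ℝ)/k))^Lmax ≤ ((g:ℝ) * x) * x^(-c) := by
        apply mul_le_mul hgLmax hρx (by positivity) (by positivity)
      calc β^(Lmax+1) = β * β^Lmax := h1
        _ ≤ (g:ℝ) * β^Lmax := by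
            apply mul_le_mul_of_nonneg_right hβg (le_of_lt (pow_pos hβ0 _))
        _ = (g:ℝ) * ((g:ℝ)^Lmax * (ρ^((1:ℝ)/k))^Lmax) := by rw [h2]
        _ ≤ (g:ℝ) * (((g:ℝ) * x) * x^(-c)) := by
            apply mul_le_mul_of_nonneg_left h3 (by linarith)
    have hxx : x * x^(-c) = x^(1-c) := by
      nth_rewrite 1 [← Real.rpow_one x]
      rw [← Real.rpow_add hx0]
      congr 1
    calc (countIn {n : ℕ | ¬ EpsKNormal g ε k n} x : ℝ) ≤ _ := hcount
      _ ≤ 2 * C₂ * β^(Lmax+1) := hsum2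
      _ ≤ 2 * C₂ * ((g:ℝ) * (((g:ℝ) * x) * x^(-c))) := by
          apply mul_le_mul_of_nonneg_left hβfinal (by linarith)
      _ = C₃ * (x * x^(-c)) := by rw [hC₃def]; ring
      _ = C₃ * x^(1-c) := by rw [hxx]
  -- finish via eventual domination
  have hθ : 0 < δ - (1 - c) := by
    rw [hδdef]
    have h1 : min c 1 ≤ c := min_le_left _ _
    linarith
  have htend := tendsto_rpow_atTop hθ
  have hev1 : ∀ᶠ x : ℝ in Filter.atTop, C₃ + 1 ≤ x^(δ-(1-c)) :=
    htend.eventually_ge_atTop (C₃+1)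
  have hev2 : ∀ᶠ x : ℝ in Filter.atTop, (1:ℝ) ≤ x := Filter.eventually_ge_atTop 1
  have hev : ∀ᶠ x : ℝ in Filter.atTop,
      C₃ * x^(1-c) < x^δ ∧ (1:ℝ) ≤ x := by
    filter_upwards [hev1, hev2] with x h1 h2
    refine ⟨?_, h2⟩
    have hx0 : (0:ℝ) < x := by linarith
    have hp : 0 < x^(1-c) := Real.rpow_pos_of_pos hx0 _
    have h3 : C₃ * x^(1-c) < (C₃+1) * x^(1-c) := by nlinarith
    have h4 : (C₃+1) * x^(1-c) ≤ x^(δ-(1-c)) * x^(1-c) :=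
      mul_le_mul_of_nonneg_right h1 (le_of_lt hp)
    have h5 : x^(δ-(1-c)) * x^(1-c) = x^δ := by
      rw [← Real.rpow_add hx0]
      congr 1
      ring
    linarith
  obtain ⟨x₀, hx₀⟩ := Filter.eventually_atTop.mp hev
  refine ⟨x₀, fun x hx => ?_⟩
  obtain ⟨h1, h2⟩ := hx₀ x (le_of_lt hx)
  exact lt_of_le_of_lt (hmainx x h2) h1
end

section
/- Let a be any one of the functions φ, σ, λ. Let d be a positive integer and set ℓ := Ω(d). Then for every real x ≥ 1, the number of positive integers n ≤ x with d ∣ a(n) is at most (x/d)·(8·ℓ·(log x)²)^ℓ. -/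
open Filter

namespace Stmt5Aux

open Finset

/-- counting function as a Finset card -/
noncomputable def cnt (f : ℕ → ℕ) (d : ℕ) (x : ℝ) : ℕ :=
  ((Finset.Icc 1 ⌊x⌋₊).filter (fun n => d ∣ f n)).card

lemma countIn_eq_cnt (f : ℕ → ℕ) (d : ℕ) (x : ℝ) (hx : 0 ≤ x) :
    countIn {n : ℕ | d ∣ f n} x = cnt f d x := by
  rw [countIn, cnt, ← Set.ncard_coe_finset]
  congr 1
  ext n
  simp only [Set.mem_setOf_eq, Finset.coe_filter, Finset.mem_Icc, Set.mem_setOf_eq,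
    Nat.le_floor_iff hx]
  constructor
  · rintro ⟨h1, h2, h3⟩; exact ⟨⟨h1, h2⟩, h3⟩
  · rintro ⟨⟨h1, h2⟩, h3⟩; exact ⟨h1, h2, h3⟩

lemma bigOmega_mul {a b : ℕ} (ha : a ≠ 0) (hb : b ≠ 0) :
    BigOmega (a * b) = BigOmega a + BigOmega b := by
  have := (Nat.perm_primeFactorsList_mul ha hb).length_eq
  simpa [BigOmega] using this

lemma bigOmega_pos {d : ℕ} (hd : 2 ≤ d) : 1 ≤ BigOmega d := by
  rw [Nat.one_le_iff_ne_zero]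
  intro h
  have : d.primeFactorsList = [] := List.length_eq_zero_iff.mp h
  rcases (Nat.primeFactorsList_eq_nil _).mp this with h | h <;> omega

lemma bigOmega_le_of_dvd {a b : ℕ} (hb : b ≠ 0) (h : a ∣ b) : BigOmega a ≤ BigOmega b := by
  obtain ⟨c, rfl⟩ := h
  have ha : a ≠ 0 := by rintro rfl; simp at hb
  have hc : c ≠ 0 := by rintro rfl; simp at hb
  rw [bigOmega_mul ha hc]; omega

lemma bigOmega_div {a b : ℕ} (hb : b ≠ 0) (h : a ∣ b) :
    BigOmega (b / a) = BigOmega b - BigOmega a := by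
  obtain ⟨c, rfl⟩ := h
  have ha : a ≠ 0 := by rintro rfl; simp at hb
  have hc : c ≠ 0 := by rintro rfl; simp at hb
  rw [Nat.mul_div_cancel_left _ (Nat.pos_of_ne_zero ha), bigOmega_mul ha hc]
  omega

lemma one_le_plog (x : ℝ) : 1 ≤ plog x := le_max_left _ _

lemma plog_pos (x : ℝ) : 0 < plog x := lt_of_lt_of_le one_pos (one_le_plog x)

lemma plog_mono {x y : ℝ} (hx : 0 < x) (h : x ≤ y) : plog x ≤ plog y := by
  unfold plog
  exact max_le_max le_rfl (Real.log_le_log hx h)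

lemma log_le_plog (x : ℝ) : Real.log x ≤ plog x := le_max_right _ _

end Stmt5Aux


namespace Stmt5Aux

open Finset

lemma exists_witness (f : ℕ → ℕ) (h1 : f 1 = 1)
    (hmul : ∀ m n : ℕ, Nat.Coprime m n → f (m * n) = f m * f n) :
    ∀ n : ℕ, 1 ≤ n → ∀ d : ℕ, 2 ≤ d → d ∣ f n →
      ∃ p : ℕ, p.Prime ∧ p ∣ n ∧ ∃ d₁ : ℕ, 2 ≤ d₁ ∧ d₁ ∣ d ∧
        d₁ ∣ f (p ^ n.factorization p) ∧ (d / d₁) ∣ f (n / p ^ n.factorization p) := by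
  intro n
  induction n using Nat.strong_induction_on with
  | _ n IH =>
    intro hn d hd hdvd
    have hn0 : n ≠ 0 := by omega
    rcases eq_or_lt_of_le hn with h1n | h2n
    · exfalso
      rw [← h1n, h1] at hdvd
      have := Nat.le_of_dvd one_pos hdvd
      omega
    · set p := n.minFac with hp_def
      have hp : p.Prime := Nat.minFac_prime (by omega)
      have hpd : p ∣ n := Nat.minFac_dvd n
      set e := n.factorization p with he_def
      set q := p ^ e with hq_def
      set m := n / q with hm_def
      have hq_dvd : q ∣ n := Nat.ordProj_dvd n p
      have hqm : q * m = n := Nat.ordProj_mul_ordCompl_eq_self n p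
      have hcop_pm : Nat.Coprime p m := Nat.coprime_ordCompl hp hn0
      have hcop : Nat.Coprime q m := Nat.Coprime.pow_left _ hcop_pm
      have hfn : f n = f q * f m := by rw [← hqm]; exact hmul q m hcop
      rw [hfn] at hdvd
      obtain ⟨d₁, d₂, hd₁, hd₂, hdd⟩ := exists_dvd_and_dvd_of_dvd_mul hdvd
      have hd₁0 : d₁ ≠ 0 := by rintro rfl; rw [zero_mul] at hdd; omega
      by_cases hd₁2 : 2 ≤ d₁
      · refine ⟨p, hp, hpd, d₁, hd₁2, ⟨d₂, hdd⟩, hd₁, ?_⟩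
        have : d / d₁ = d₂ := by rw [hdd, Nat.mul_div_cancel_left _ (Nat.pos_of_ne_zero hd₁0)]
        rw [this]; exact hd₂
      · -- d₁ = 1
        have hd₁1 : d₁ = 1 := by omega
        rw [hd₁1, one_mul] at hdd
        subst hdd
        have he_pos : 1 ≤ e := hp.factorization_pos_of_dvd hn0 hpd
        have hq2 : 2 ≤ q := by
          have : 1 < p ^ e := Nat.one_lt_pow (by omega) hp.one_lt
          omega
        have hm_pos : 1 ≤ m := Nat.div_pos (Nat.le_of_dvd (by omega) hq_dvd) (by omega)
        have hm_lt : m < n := Nat.div_lt_self (by omega) (by omega)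
        have hm1 : m ≠ 1 := by
          intro hmeq
          rw [hmeq, h1] at hd₂
          have := Nat.le_of_dvd one_pos hd₂; omega
        obtain ⟨p', hp', hp'm, d₁', hd₁'2, hd₁'d, hd₁'f, hrest⟩ :=
          IH m hm_lt hm_pos d hd hd₂
        have hm0 : m ≠ 0 := by omega
        have hp'p : p' ≠ p := by
          intro heq
          rw [heq] at hp'm
          have hdg := Nat.dvd_gcd (dvd_refl p) hp'm
          rw [Nat.Coprime] at hcop_pm
          rw [hcop_pm] at hdg
          have := Nat.le_of_dvd one_pos hdg
          have := hp.two_le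
          omega
        set e' := m.factorization p' with he'_def
        have hfact_eq : n.factorization p' = e' := by
          rw [← hqm, Nat.factorization_mul (by positivity) hm0]
          simp only [Finsupp.coe_add, Pi.add_apply]
          rw [hq_def, hp.factorization_pow]
          simp [Finsupp.single_apply, Ne.symm hp'p]
          rfl
        refine ⟨p', hp', hp'm.trans (Nat.ordCompl_dvd n p), d₁', hd₁'2, hd₁'d, ?_, ?_⟩
        · rw [hfact_eq]; exact hd₁'f
        · rw [hfact_eq]
          have hdvd_m : p' ^ e' ∣ m := Nat.ordProj_dvd m p'
          have : n / p' ^ e' = q * (m / p' ^ e') := by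
            rw [← hqm, Nat.mul_div_assoc q hdvd_m]
          rw [this, hmul q (m / p' ^ e')
            (Nat.Coprime.pow_left _ (hcop_pm.coprime_dvd_right (Nat.div_dvd_of_dvd hdvd_m)))]
          exact Dvd.dvd.mul_left hrest _

end Stmt5Aux

namespace Stmt5Aux

open Finset

/-- the set of prime powers `q ≤ ⌊x⌋` with `d₁ ∣ f q` -/
noncomputable def Qset (f : ℕ → ℕ) (d₁ : ℕ) (x : ℝ) : Finset ℕ :=
  (Finset.Icc 1 ⌊x⌋₊).filter (fun q => IsPrimePow q ∧ d₁ ∣ f q)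

lemma nat_log_le (X : ℕ) (x : ℝ) (hx : 1 ≤ x) (hX : (X : ℝ) ≤ x) :
    (Nat.log 2 X : ℝ) ≤ 3 / 2 * plog x := by
  rcases Nat.eq_zero_or_pos X with h | hXpos
  · simp only [h, Nat.log_zero_right, Nat.cast_zero]
    have := plog_pos x; linarith
  have h2 : (2 : ℕ) ^ Nat.log 2 X ≤ X := Nat.pow_log_le_self 2 (by omega)
  have h2R : (2 : ℝ) ^ (Nat.log 2 X) ≤ x := by
    calc ((2 : ℕ) ^ Nat.log 2 X : ℝ) ≤ (X : ℝ) := by exact_mod_cast Nat.cast_le.mpr h2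
    _ ≤ x := hX
  have hlog : (Nat.log 2 X : ℝ) * Real.log 2 ≤ Real.log x := by
    have := Real.log_le_log (by positivity) h2R
    rwa [Real.log_pow] at this
  have hlog2 : (0.6931471803 : ℝ) < Real.log 2 := Real.log_two_gt_d9
  have hpl : Real.log x ≤ plog x := log_le_plog x
  have hnn : (0 : ℝ) ≤ (Nat.log 2 X : ℝ) := Nat.cast_nonneg _
  have h6 : (Nat.log 2 X : ℝ) * 0.6931471803 ≤ plog x := by nlinarith
  have hL1 : (1 : ℝ) ≤ plog x := one_le_plog x
  nlinarith

lemma harmonic_bound (X : ℕ) (x : ℝ) (hx : 1 ≤ x) (hX : (X : ℝ) ≤ x) :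
    ∑ k ∈ Finset.Icc 1 X, (k : ℝ)⁻¹ ≤ 2 * plog x := by
  have h1 : ∑ k ∈ Finset.Icc 1 X, (k : ℝ)⁻¹ = (harmonic X : ℝ) := by
    rw [harmonic_eq_sum_Icc]
    push_cast
    rfl
  rw [h1]
  have h2 := harmonic_le_one_add_log X
  have h3 : Real.log X ≤ Real.log x := by
    rcases Nat.eq_zero_or_pos X with h | hXpos
    · simp [h]; exact Real.log_nonneg hx
    · exact Real.log_le_log (by exact_mod_cast hXpos) hX
  have h4 : Real.log x ≤ plog x := log_le_plog x
  have h5 : (1 : ℝ) ≤ plog x := one_le_plog x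
  linarith

/-- main analytic estimate: `∑_{q ∈ Q} 1/q ≤ 6 (plog x)² / d₁`. -/
lemma sum_Q_inv_le (f : ℕ → ℕ)
    (hub : ∀ p e : ℕ, p.Prime → 1 ≤ e → f (p ^ e) ≤ 2 * p ^ e)
    (hlb : ∀ p e : ℕ, p.Prime → 1 ≤ e → p ^ e ≤ 2 * f (p ^ e))
    (hinj : ∀ p₁ p₂ e : ℕ, p₁.Prime → p₂.Prime → 1 ≤ e →
      f (p₁ ^ e) = f (p₂ ^ e) → p₁ = p₂)
    (d₁ : ℕ) (hd₁ : 2 ≤ d₁) (x : ℝ) (hx : 1 ≤ x) :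
    ∑ q ∈ Qset f d₁ x, (q : ℝ)⁻¹ ≤ 6 * plog x ^ 2 / d₁ := by
  set X := ⌊x⌋₊ with hX_def
  have hXx : (X : ℝ) ≤ x := Nat.floor_le (by linarith)
  have hQ : ∀ q ∈ Qset f d₁ x, ∃ p e : ℕ, p.Prime ∧ 1 ≤ e ∧ q = p ^ e ∧
      q ≤ X ∧ d₁ ∣ f q := by
    intro q hq
    rw [Qset, Finset.mem_filter, Finset.mem_Icc] at hq
    obtain ⟨⟨hq1, hq2⟩, ⟨p, e, hp, he, hpe⟩, hdvd⟩ := hq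
    exact ⟨p, e, hp.nat_prime, he, hpe.symm, hq2, hdvd⟩
  set φ : ℕ → ℕ × ℕ := fun q => (q.factorization q.minFac, f q / d₁) with hφ_def
  have hφ_spec : ∀ q : ℕ, ∀ p e : ℕ, p.Prime → 1 ≤ e → q = p ^ e →
      φ q = (e, f q / d₁) := by
    intro q p e hp he hqe
    simp only [hφ_def]
    rw [hqe, Nat.pow_minFac (by omega), hp.minFac_eq, hp.factorization_pow]
    simp
  -- basic facts about elements
  have hfacts : ∀ q ∈ Qset f d₁ x, 2 ≤ q ∧ 1 ≤ f q ∧ f q ≤ 2 * q ∧ 1 ≤ f q / d₁ ∧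
      f q / d₁ ≤ X := by
    intro q hq
    obtain ⟨p, e, hp, he, hqe, hqX, hdvd⟩ := hQ q hq
    have hq2 : 2 ≤ q := by
      have : 1 < p ^ e := Nat.one_lt_pow (by omega) hp.one_lt
      omega
    have hub' : f q ≤ 2 * q := by rw [hqe]; exact hub p e hp he
    have hlb' : q ≤ 2 * f q := by rw [hqe]; exact hlb p e hp he
    have hf1 : 1 ≤ f q := by omega
    have hk1 : 1 ≤ f q / d₁ := Nat.div_pos (Nat.le_of_dvd (by omega) hdvd) (by omega)
    have hkX : f q / d₁ ≤ X := by
      calc f q / d₁ ≤ f q / 2 := Nat.div_le_div_left hd₁ (by omega)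
      _ ≤ 2 * q / 2 := Nat.div_le_div_right hub'
      _ = q := by omega
      _ ≤ X := hqX
    exact ⟨hq2, hf1, hub', hk1, hkX⟩
  -- injectivity on Q
  have hφ_inj : Set.InjOn φ (Qset f d₁ x) := by
    intro q hq q' hq' heq
    obtain ⟨p, e, hp, he, hqe, hqX, hdvd⟩ := hQ q hq
    obtain ⟨p', e', hp', he', hqe', hqX', hdvd'⟩ := hQ q' hq'
    rw [hφ_spec q p e hp he hqe, hφ_spec q' p' e' hp' he' hqe'] at heq
    have hee : e = e' := ((Prod.mk.injEq _ _ _ _).mp heq).1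
    have hkk : f q / d₁ = f q' / d₁ := ((Prod.mk.injEq _ _ _ _).mp heq).2
    have hfq : f q = f q' := by
      obtain ⟨c, hc⟩ := hdvd
      obtain ⟨c', hc'⟩ := hdvd'
      rw [hc, hc', Nat.mul_div_cancel_left c (by omega),
        Nat.mul_div_cancel_left c' (by omega)] at hkk
      rw [hc, hc', hkk]
    subst hee
    rw [hqe, hqe']
    rw [hqe, hqe'] at hfq
    rw [hinj p p' e hp hp' he hfq]
  set g : ℕ × ℕ → ℝ := fun ek => 2 / (d₁ : ℝ) * ((ek.2 : ℝ))⁻¹ with hg_def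
  -- pointwise bound
  have hpt : ∀ q ∈ Qset f d₁ x, (q : ℝ)⁻¹ ≤ g (φ q) := by
    intro q hq
    obtain ⟨p, e, hp, he, hqe, hqX, hdvd⟩ := hQ q hq
    obtain ⟨hq2, hf1, hub', hk1, hkX⟩ := hfacts q hq
    rw [hφ_spec q p e hp he hqe]
    simp only [hg_def]
    have hfd : (f q / d₁ : ℕ) * d₁ = f q := Nat.div_mul_cancel hdvd
    have hk0 : (0 : ℝ) < ((f q / d₁ : ℕ) : ℝ) := by exact_mod_cast hk1
    have hq0 : (0 : ℝ) < (q : ℝ) := by positivity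
    have hcast : ((f q / d₁ : ℕ) : ℝ) * (d₁ : ℝ) = (f q : ℝ) := by exact_mod_cast hfd
    have hubR : (f q : ℝ) ≤ 2 * (q : ℝ) := by exact_mod_cast hub'
    have key : (q : ℝ)⁻¹ ≤ 2 / (((f q / d₁ : ℕ) : ℝ) * (d₁ : ℝ)) := by
      rw [inv_eq_one_div, div_le_div_iff₀ hq0 (by positivity)]
      nlinarith
    calc (q : ℝ)⁻¹ ≤ 2 / (((f q / d₁ : ℕ) : ℝ) * (d₁ : ℝ)) := key
    _ = 2 / (d₁ : ℝ) * (((f q / d₁ : ℕ) : ℝ))⁻¹ := by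
        field_simp
  -- subset of the product box
  have hsub : (Qset f d₁ x).image φ ⊆ Finset.Icc 1 (Nat.log 2 X) ×ˢ Finset.Icc 1 X := by
    intro ek hek
    rw [Finset.mem_image] at hek
    obtain ⟨q, hq, rfl⟩ := hek
    obtain ⟨p, e, hp, he, hqe, hqX, hdvd⟩ := hQ q hq
    obtain ⟨hq2, hf1, hub', hk1, hkX⟩ := hfacts q hq
    rw [hφ_spec q p e hp he hqe]
    rw [Finset.mem_product, Finset.mem_Icc, Finset.mem_Icc]
    have hX0 : X ≠ 0 := by omega
    have h2e : 2 ^ e ≤ X := by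
      calc 2 ^ e ≤ p ^ e := Nat.pow_le_pow_left hp.two_le e
      _ = q := hqe.symm
      _ ≤ X := hqX
    exact ⟨⟨he, (Nat.le_log_iff_pow_le one_lt_two hX0).mpr h2e⟩, hk1, hkX⟩
  have hEle := nat_log_le X x hx hXx
  have hH := harmonic_bound X x hx hXx
  have hL1 : (1 : ℝ) ≤ plog x := one_le_plog x
  have hd₁R : (0 : ℝ) < (d₁ : ℝ) := by exact_mod_cast (by omega : 0 < d₁)
  calc ∑ q ∈ Qset f d₁ x, (q : ℝ)⁻¹
      ≤ ∑ q ∈ Qset f d₁ x, g (φ q) := Finset.sum_le_sum hpt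
    _ = ∑ ek ∈ (Qset f d₁ x).image φ, g ek :=
        (Finset.sum_image (fun q hq q' hq' h => hφ_inj hq hq' h)).symm
    _ ≤ ∑ ek ∈ Finset.Icc 1 (Nat.log 2 X) ×ˢ Finset.Icc 1 X, g ek := by
        apply Finset.sum_le_sum_of_subset_of_nonneg hsub
        intro i _ _
        simp only [hg_def]
        positivity
    _ = (Nat.log 2 X : ℝ) * ((2 / (d₁ : ℝ)) * ∑ k ∈ Finset.Icc 1 X, (k : ℝ)⁻¹) := by
        rw [Finset.sum_product]
        simp only [hg_def]
        rw [Finset.sum_const, Nat.card_Icc, ← Finset.mul_sum]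
        simp [nsmul_eq_mul]
    _ ≤ (3 / 2 * plog x) * ((2 / (d₁ : ℝ)) * (2 * plog x)) := by
        apply mul_le_mul hEle ?_ ?_ (by positivity)
        · apply mul_le_mul_of_nonneg_left hH (by positivity)
        · have : (0:ℝ) ≤ ∑ k ∈ Finset.Icc 1 X, (k : ℝ)⁻¹ := by
            apply Finset.sum_nonneg; intro k _; positivity
          positivity
    _ = 6 * plog x ^ 2 / d₁ := by ring

end Stmt5Aux

namespace Stmt5Aux

open Finset

lemma bigOmega_one : BigOmega 1 = 0 := by simp [BigOmega]

lemma divisor_sum_pow_le :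
    ∀ d : ℕ, 1 ≤ d → ∀ y : ℝ, 1 ≤ y →
      ∑ d₁ ∈ d.divisors, y ^ (BigOmega d - BigOmega d₁) ≤ (y + 1) ^ BigOmega d := by
  intro d
  induction d using Nat.strong_induction_on with
  | _ d IH =>
    intro hd y hy
    rcases eq_or_lt_of_le hd with h1 | h2
    · rw [← h1]
      simp [Nat.divisors_one, bigOmega_one]
    · set p := d.minFac with hp_def
      have hp : p.Prime := Nat.minFac_prime (by omega)
      have hpd : p ∣ d := Nat.minFac_dvd d
      set d' := d / p with hd'_def
      have hdd : p * d' = d := Nat.mul_div_cancel' hpd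
      have hd'1 : 1 ≤ d' := Nat.div_pos (Nat.le_of_dvd (by omega) hpd) hp.pos
      have hd'lt : d' < d := Nat.div_lt_self (by omega) hp.one_lt
      have hΩp : BigOmega p = 1 := by
        simp [BigOmega, Nat.primeFactorsList_prime hp]
      have hΩ : BigOmega d = BigOmega d' + 1 := by
        rw [← hdd, bigOmega_mul hp.pos.ne' (by omega), hΩp]
        omega
      have hsub : d.divisors ⊆ d'.divisors ∪ d'.divisors.image (p * ·) := by
        intro a ha
        rw [Nat.mem_divisors] at ha
        obtain ⟨had, hd0⟩ := ha
        rw [Finset.mem_union]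
        by_cases hpa : p ∣ a
        · right
          obtain ⟨b, rfl⟩ := hpa
          rw [Finset.mem_image]
          refine ⟨b, ?_, rfl⟩
          rw [Nat.mem_divisors]
          constructor
          · have : p * b ∣ p * d' := by rw [hdd]; exact had
            exact (mul_dvd_mul_iff_left hp.pos.ne').mp this
          · omega
        · left
          rw [Nat.mem_divisors]
          constructor
          · have hcop : Nat.Coprime a p := (hp.coprime_iff_not_dvd.mpr hpa).symm
            have : a ∣ p * d' := by rw [hdd]; exact had
            exact hcop.dvd_of_dvd_mul_left this
          · omega
      have hy0 : (0:ℝ) ≤ y := by linarith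
      calc ∑ d₁ ∈ d.divisors, y ^ (BigOmega d - BigOmega d₁)
          ≤ ∑ d₁ ∈ d'.divisors ∪ d'.divisors.image (p * ·),
              y ^ (BigOmega d - BigOmega d₁) := by
            apply Finset.sum_le_sum_of_subset_of_nonneg hsub
            intro i _ _; positivity
        _ ≤ ∑ d₁ ∈ d'.divisors, y ^ (BigOmega d - BigOmega d₁)
            + ∑ d₁ ∈ d'.divisors.image (p * ·), y ^ (BigOmega d - BigOmega d₁) := by
            have := Finset.sum_union_inter (s₁ := d'.divisors) (s₂ := d'.divisors.image (p * ·))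
              (f := fun d₁ => y ^ (BigOmega d - BigOmega d₁))
            have hnn : (0:ℝ) ≤ ∑ d₁ ∈ d'.divisors ∩ d'.divisors.image (p * ·),
                y ^ (BigOmega d - BigOmega d₁) := by
              apply Finset.sum_nonneg; intro i _; positivity
            linarith
        _ ≤ y * ∑ d₁ ∈ d'.divisors, y ^ (BigOmega d' - BigOmega d₁)
            + ∑ d₁ ∈ d'.divisors, y ^ (BigOmega d' - BigOmega d₁) := by
            apply add_le_add
            · rw [Finset.mul_sum]
              apply Finset.sum_le_sum
              intro i hi
              rw [Nat.mem_divisors] at hi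
              have hΩi : BigOmega i ≤ BigOmega d' := bigOmega_le_of_dvd (by omega) hi.1
              have : BigOmega d - BigOmega i = (BigOmega d' - BigOmega i) + 1 := by omega
              rw [this, pow_succ]
              ring_nf
              exact le_refl _
            · rw [Finset.sum_image]
              · apply Finset.sum_le_sum
                intro i hi
                rw [Nat.mem_divisors] at hi
                have hi0 : i ≠ 0 := by
                  rintro rfl; exact absurd (zero_dvd_iff.mp hi.1) (by omega)
                have hΩi : BigOmega i ≤ BigOmega d' := bigOmega_le_of_dvd (by omega) hi.1
                have hΩpi : BigOmega (p * i) = BigOmega i + 1 := by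
                  rw [bigOmega_mul hp.pos.ne' hi0, hΩp]; omega
                have : BigOmega d - BigOmega (p * i) = BigOmega d' - BigOmega i := by omega
                rw [this]
              · intro a _ b _ hab
                exact Nat.eq_of_mul_eq_mul_left hp.pos hab
        _ = (y + 1) * ∑ d₁ ∈ d'.divisors, y ^ (BigOmega d' - BigOmega d₁) := by ring
        _ ≤ (y + 1) * (y + 1) ^ BigOmega d' := by
            apply mul_le_mul_of_nonneg_left (IH d' hd'lt hd'1 y hy) (by linarith)
        _ = (y + 1) ^ BigOmega d := by rw [hΩ, pow_succ]; ring

lemma exp_eighth_lt : Real.exp ((8:ℝ)⁻¹) ≤ 4/3 := by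
  by_contra h
  push_neg at h
  have h8 : Real.exp ((8:ℝ)⁻¹) ^ (8:ℕ) = Real.exp 1 := by
    rw [← Real.exp_nat_mul]; norm_num
  have hlt : ((4:ℝ)/3) ^ (8:ℕ) < Real.exp ((8:ℝ)⁻¹) ^ (8:ℕ) :=
    pow_lt_pow_left₀ h (by norm_num) (by norm_num)
  rw [h8] at hlt
  have := Real.exp_one_lt_d9
  norm_num at hlt
  linarith

lemma numeric_key (ℓ : ℕ) (hl : 1 ≤ ℓ) (L : ℝ) (hL : 1 ≤ L) :
    6 * L ^ 2 * ((8 * ℓ * L ^ 2 + 1) ^ ℓ - (8 * ℓ * L ^ 2) ^ ℓ) ≤ (8 * ℓ * L ^ 2) ^ ℓ := by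
  have hlR : (1:ℝ) ≤ (ℓ : ℝ) := by exact_mod_cast hl
  set y : ℝ := 8 * ℓ * L ^ 2 with hy_def
  have hy8 : 8 ≤ y := by nlinarith
  have hy0 : (0:ℝ) < y := by linarith
  set z : ℝ := 1 / (8 * L ^ 2) with hz_def
  have hz0 : 0 < z := by positivity
  have hz8 : z ≤ 8⁻¹ := by
    rw [hz_def]
    rw [div_le_iff₀ (by positivity)]
    nlinarith
  have hzy : (ℓ : ℝ) / y = z := by
    rw [hy_def, hz_def]
    field_simp
  have hsplit : (y + 1) ^ ℓ = y ^ ℓ * (1 + 1/y) ^ ℓ := by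
    rw [← mul_pow]
    congr 1
    field_simp
  have h1 : (1 + 1/y) ^ ℓ ≤ Real.exp z := by
    calc (1 + 1/y) ^ ℓ ≤ Real.exp (1/y) ^ ℓ := by
          apply pow_le_pow_left₀ (by positivity)
          have := Real.add_one_le_exp (1/y)
          linarith
      _ = Real.exp (ℓ * (1/y)) := by rw [← Real.exp_nat_mul]
      _ = Real.exp ((ℓ:ℝ) / y) := by rw [mul_one_div]
      _ = Real.exp z := by rw [hzy]
  have hez : Real.exp z ≤ 4/3 := by
    calc Real.exp z ≤ Real.exp ((8:ℝ)⁻¹) := Real.exp_le_exp.mpr hz8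
    _ ≤ 4/3 := exp_eighth_lt
  have hez1 : Real.exp z - 1 ≤ z * (4/3) := by
    have hneg := Real.add_one_le_exp (-z)
    have hexppos := Real.exp_pos z
    have hprod : Real.exp (-z) * Real.exp z = 1 := by
      rw [← Real.exp_add]; simp
    nlinarith
  -- 6 L² (expz − 1) ≤ 6 L² z (4/3) = 1
  have hA : 6 * L ^ 2 * ((1 + 1/y) ^ ℓ - 1) ≤ 1 := by
    have h2 : (1 + 1/y) ^ ℓ - 1 ≤ z * (4/3) := by linarith
    have h3 : 6 * L ^ 2 * (z * (4/3)) = 1 := by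
      rw [hz_def]; field_simp; ring
    nlinarith [sq_nonneg L]
  have hyl0 : (0:ℝ) ≤ y ^ ℓ := by positivity
  calc 6 * L ^ 2 * ((y + 1) ^ ℓ - y ^ ℓ)
      = y ^ ℓ * (6 * L ^ 2 * ((1 + 1/y) ^ ℓ - 1)) := by rw [hsplit]; ring
    _ ≤ y ^ ℓ * 1 := mul_le_mul_of_nonneg_left hA hyl0
    _ = y ^ ℓ := mul_one _

end Stmt5Aux

namespace Stmt5Aux

open Finset

lemma cnt_le_sum (f : ℕ → ℕ) (h1 : f 1 = 1)
    (hmul : ∀ m n : ℕ, Nat.Coprime m n → f (m * n) = f m * f n)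
    (d : ℕ) (hd : 2 ≤ d) (x : ℝ) (hx : 1 ≤ x) :
    cnt f d x ≤ ∑ d₁ ∈ d.divisors.erase 1, ∑ q ∈ Qset f d₁ x, cnt f (d / d₁) (x / q) := by
  have hx0 : (0:ℝ) ≤ x := by linarith
  set X := ⌊x⌋₊ with hX_def
  set B : ℕ → ℕ → Finset ℕ := fun d₁ q =>
    (Finset.Icc 1 ⌊x / q⌋₊).filter (fun m => (d / d₁) ∣ f m) with hB_def
  have hsub : (Finset.Icc 1 X).filter (fun n => d ∣ f n) ⊆
      (d.divisors.erase 1).biUnion (fun d₁ =>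
        (Qset f d₁ x).biUnion (fun q => (B d₁ q).image (q * ·))) := by
    intro n hn
    rw [Finset.mem_filter, Finset.mem_Icc] at hn
    obtain ⟨⟨hn1, hnX⟩, hdvd⟩ := hn
    obtain ⟨p, hp, hpn, d₁, hd₁2, hd₁d, hd₁f, hrest⟩ :=
      exists_witness f h1 hmul n hn1 d hd hdvd
    set e := n.factorization p with he_def
    set q := p ^ e with hq_def
    have he1 : 1 ≤ e := hp.factorization_pos_of_dvd (by omega) hpn
    have hqn : q ∣ n := Nat.ordProj_dvd n p
    have hq1 : 1 ≤ q := pow_pos hp.pos e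
    have hqX : q ≤ X := le_trans (Nat.le_of_dvd (by omega) hqn) hnX
    set m := n / q with hm_def
    have hqm : q * m = n := Nat.mul_div_cancel' hqn
    have hm1 : 1 ≤ m := Nat.div_pos (Nat.le_of_dvd (by omega) hqn) (by omega)
    have hqR : (0:ℝ) < (q:ℝ) := by exact_mod_cast hq1
    rw [Finset.mem_biUnion]
    refine ⟨d₁, ?_, ?_⟩
    · rw [Finset.mem_erase, Nat.mem_divisors]
      exact ⟨by omega, hd₁d, by omega⟩
    rw [Finset.mem_biUnion]
    refine ⟨q, ?_, ?_⟩
    · rw [Qset, Finset.mem_filter, Finset.mem_Icc]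
      exact ⟨⟨by omega, hqX⟩, ⟨p, e, hp.prime, by omega, rfl⟩, hd₁f⟩
    rw [Finset.mem_image]
    refine ⟨m, ?_, hqm⟩
    simp only [hB_def]
    rw [Finset.mem_filter, Finset.mem_Icc]
    refine ⟨⟨hm1, ?_⟩, hrest⟩
    rw [Nat.le_floor_iff (by positivity)]
    rw [le_div_iff₀ hqR]
    have hmq : (m:ℝ) * q = (n:ℝ) := by
      have h' : m * q = n := by rw [mul_comm]; exact hqm
      exact_mod_cast h'
    have hnx : (n:ℝ) ≤ x := le_trans (by exact_mod_cast hnX) (Nat.floor_le hx0)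
    linarith
  calc cnt f d x
      ≤ ((d.divisors.erase 1).biUnion (fun d₁ =>
          (Qset f d₁ x).biUnion (fun q => (B d₁ q).image (q * ·)))).card :=
        Finset.card_le_card hsub
    _ ≤ ∑ d₁ ∈ d.divisors.erase 1,
          ((Qset f d₁ x).biUnion (fun q => (B d₁ q).image (q * ·))).card :=
        Finset.card_biUnion_le
    _ ≤ ∑ d₁ ∈ d.divisors.erase 1, ∑ q ∈ Qset f d₁ x, cnt f (d / d₁) (x / q) := by
        apply Finset.sum_le_sum
        intro d₁ _
        refine le_trans Finset.card_biUnion_le (Finset.sum_le_sum ?_)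
        intro q _
        exact le_trans Finset.card_image_le (le_of_eq rfl)

set_option maxHeartbeats 1600000 in
theorem main_abstract (f : ℕ → ℕ) (h1 : f 1 = 1)
    (hmul : ∀ m n : ℕ, Nat.Coprime m n → f (m * n) = f m * f n)
    (hub : ∀ p e : ℕ, p.Prime → 1 ≤ e → f (p ^ e) ≤ 2 * p ^ e)
    (hlb : ∀ p e : ℕ, p.Prime → 1 ≤ e → p ^ e ≤ 2 * f (p ^ e))
    (hinj : ∀ p₁ p₂ e : ℕ, p₁.Prime → p₂.Prime → 1 ≤ e →
      f (p₁ ^ e) = f (p₂ ^ e) → p₁ = p₂) :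
    ∀ d : ℕ, 1 ≤ d → ∀ x : ℝ, 1 ≤ x →
      (cnt f d x : ℝ) ≤ x / d * (8 * BigOmega d * plog x ^ 2) ^ BigOmega d := by
  intro d
  induction d using Nat.strong_induction_on with
  | _ d IH =>
    intro hd x hx
    have hx0 : (0:ℝ) ≤ x := by linarith
    rcases eq_or_lt_of_le hd with hd1 | hd2
    · rw [← hd1, bigOmega_one]
      simp only [pow_zero, Nat.cast_one, div_one, mul_one]
      calc (cnt f 1 x : ℝ) ≤ ((Finset.Icc 1 ⌊x⌋₊).card : ℝ) := by
            exact_mod_cast Finset.card_filter_le _ _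
        _ = (⌊x⌋₊ : ℝ) := by rw [Nat.card_Icc]; simp
        _ ≤ x := Nat.floor_le hx0
    · set ℓ := BigOmega d with hℓ_def
      have hℓ1 : 1 ≤ ℓ := bigOmega_pos hd2
      set L := plog x with hL_def
      have hL1 : (1:ℝ) ≤ L := one_le_plog x
      set y : ℝ := 8 * (ℓ:ℝ) * L ^ 2 with hy_def
      have hℓR : (1:ℝ) ≤ (ℓ:ℝ) := by exact_mod_cast hℓ1
      have hy8 : (8:ℝ) ≤ y := by nlinarith
      have hy0 : (0:ℝ) ≤ y := by linarith
      have hdR : (0:ℝ) < (d:ℝ) := by exact_mod_cast (by omega : 0 < d)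
      have hxd : (0:ℝ) ≤ x / d := div_nonneg hx0 hdR.le
      have h0 : (cnt f d x : ℝ) ≤
          ∑ d₁ ∈ d.divisors.erase 1, ∑ q ∈ Qset f d₁ x, (cnt f (d / d₁) (x / q) : ℝ) := by
        have := cnt_le_sum f h1 hmul d hd2 x hx
        exact_mod_cast this
      have h2 : ∀ d₁ ∈ d.divisors.erase 1,
          ∑ q ∈ Qset f d₁ x, (cnt f (d / d₁) (x / q) : ℝ) ≤
            x / d * (6 * L ^ 2) * y ^ (ℓ - BigOmega d₁) := by
        intro d₁ hd₁
        rw [Finset.mem_erase, Nat.mem_divisors] at hd₁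
        obtain ⟨hd₁ne1, hd₁d, hd0⟩ := hd₁
        have hd₁0 : d₁ ≠ 0 := by rintro rfl; exact hd0 (zero_dvd_iff.mp hd₁d)
        have hd₁2 : 2 ≤ d₁ := by omega
        set d' := d / d₁ with hd'_def
        have hd'1 : 1 ≤ d' := Nat.div_pos (Nat.le_of_dvd (by omega) hd₁d) (by omega)
        have hd'lt : d' < d := Nat.div_lt_self (by omega) (by omega)
        have hd'd₁ : d' * d₁ = d := Nat.div_mul_cancel hd₁d
        have hΩ' : BigOmega d' = ℓ - BigOmega d₁ := bigOmega_div (by omega) hd₁d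
        have hΩle : BigOmega d₁ ≤ ℓ := bigOmega_le_of_dvd (by omega) hd₁d
        have hd'R : (0:ℝ) < (d':ℝ) := by exact_mod_cast hd'1
        have hd₁R : (0:ℝ) < (d₁:ℝ) := by exact_mod_cast (by omega : 0 < d₁)
        have hq_bound : ∀ q ∈ Qset f d₁ x, (cnt f d' (x/q) : ℝ) ≤
            (x / d') * y ^ (ℓ - BigOmega d₁) * (q:ℝ)⁻¹ := by
          intro q hq
          rw [Qset, Finset.mem_filter, Finset.mem_Icc] at hq
          obtain ⟨⟨hq1, hqX⟩, _, _⟩ := hq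
          have hqR : (0:ℝ) < (q:ℝ) := by exact_mod_cast hq1
          have hqx : (q : ℝ) ≤ x := le_trans (by exact_mod_cast hqX) (Nat.floor_le hx0)
          have hxq1 : (1:ℝ) ≤ x / q := by rw [le_div_iff₀ hqR]; nlinarith
          have hIH := IH d' hd'lt hd'1 (x/q) hxq1
          have hxq0 : (0:ℝ) < x / q := by linarith
          have hplogle : plog (x/q) ≤ L := by
            rw [hL_def]
            apply plog_mono hxq0
            rw [div_le_iff₀ hqR]
            nlinarith [mul_le_mul_of_nonneg_left (show (1:ℝ) ≤ (q:ℝ) from by exact_mod_cast hq1) hx0]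
          have hplog1 : (1:ℝ) ≤ plog (x/q) := one_le_plog _
          have hΩ'R : (BigOmega d' : ℝ) ≤ (ℓ : ℝ) := by
            exact_mod_cast bigOmega_le_of_dvd (by omega) (Nat.div_dvd_of_dvd hd₁d)
          have hbase : (0:ℝ) ≤ 8 * (BigOmega d' : ℝ) * plog (x/q) ^ 2 := by positivity
          have hplog0 : (0:ℝ) ≤ plog (x/q) := by linarith
          have hbase2 : 8 * (BigOmega d' : ℝ) * plog (x/q) ^ 2 ≤ y := by
            rw [hy_def]
            gcongr
          calc (cnt f d' (x/q) : ℝ)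
              ≤ (x/q) / d' * (8 * (BigOmega d') * plog (x/q) ^ 2) ^ (BigOmega d') := hIH
            _ ≤ (x/q) / d' * y ^ (ℓ - BigOmega d₁) := by
                rw [← hΩ']
                apply mul_le_mul_of_nonneg_left (pow_le_pow_left₀ hbase hbase2 _)
                  (div_nonneg (by linarith) hd'R.le)
            _ = (x / d') * y ^ (ℓ - BigOmega d₁) * (q:ℝ)⁻¹ := by
                field_simp
        calc ∑ q ∈ Qset f d₁ x, (cnt f d' (x/q) : ℝ)
            ≤ ∑ q ∈ Qset f d₁ x, (x / d') * y ^ (ℓ - BigOmega d₁) * (q:ℝ)⁻¹ :=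
              Finset.sum_le_sum hq_bound
          _ = (x / d') * y ^ (ℓ - BigOmega d₁) * ∑ q ∈ Qset f d₁ x, (q:ℝ)⁻¹ := by
              rw [← Finset.mul_sum]
          _ ≤ (x / d') * y ^ (ℓ - BigOmega d₁) * (6 * L ^ 2 / d₁) := by
              apply mul_le_mul_of_nonneg_left
                (sum_Q_inv_le f hub hlb hinj d₁ hd₁2 x hx)
                (mul_nonneg (div_nonneg hx0 hd'R.le) (pow_nonneg hy0 _))
          _ = x / d * (6 * L ^ 2) * y ^ (ℓ - BigOmega d₁) := by
              have hcast : (d:ℝ) = (d':ℝ) * (d₁:ℝ) := by exact_mod_cast hd'd₁.symm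
              rw [hcast]
              field_simp
      have hmem1 : (1:ℕ) ∈ d.divisors := Nat.one_mem_divisors.mpr (by omega)
      have hsum : ∑ d₁ ∈ d.divisors.erase 1, y ^ (ℓ - BigOmega d₁) ≤ (y+1)^ℓ - y^ℓ := by
        have hadd := Finset.sum_erase_add d.divisors (fun d₁ => y ^ (ℓ - BigOmega d₁)) hmem1
        have hfull := divisor_sum_pow_le d (by omega) y (by linarith)
        rw [← hℓ_def] at hfull
        simp only [bigOmega_one, Nat.sub_zero] at hadd
        linarith
      have hnum := numeric_key ℓ hℓ1 L hL1
      rw [← hy_def] at hnum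
      calc (cnt f d x : ℝ)
          ≤ ∑ d₁ ∈ d.divisors.erase 1, ∑ q ∈ Qset f d₁ x, (cnt f (d / d₁) (x / q) : ℝ) := h0
        _ ≤ ∑ d₁ ∈ d.divisors.erase 1, x / d * (6 * L ^ 2) * y ^ (ℓ - BigOmega d₁) :=
            Finset.sum_le_sum h2
        _ = x / d * (6 * L ^ 2) * ∑ d₁ ∈ d.divisors.erase 1, y ^ (ℓ - BigOmega d₁) := by
            rw [← Finset.mul_sum]
        _ ≤ x / d * (6 * L ^ 2) * ((y+1)^ℓ - y^ℓ) := by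
            apply mul_le_mul_of_nonneg_left hsum
            apply mul_nonneg hxd
            nlinarith
        _ = x / d * (6 * L ^ 2 * ((y+1)^ℓ - y^ℓ)) := by ring
        _ ≤ x / d * y ^ ℓ := mul_le_mul_of_nonneg_left hnum hxd

end Stmt5Aux

namespace Stmt5Aux

open Finset

-- ===== totient =====

lemma totient_pp_lt {p₁ p₂ e : ℕ} (hp₁ : p₁.Prime) (hp₂ : p₂.Prime) (he : 1 ≤ e)
    (h : p₁ < p₂) : Nat.totient (p₁ ^ e) < Nat.totient (p₂ ^ e) := by
  rw [Nat.totient_prime_pow hp₁ (by omega), Nat.totient_prime_pow hp₂ (by omega)]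
  have hpow : p₁ ^ (e - 1) ≤ p₂ ^ (e - 1) := Nat.pow_le_pow_left h.le _
  have hsub : p₁ - 1 < p₂ - 1 := by
    have := hp₁.two_le; omega
  exact mul_lt_mul' hpow hsub (Nat.zero_le _) (pow_pos hp₂.pos _)

lemma totient_hub : ∀ p e : ℕ, p.Prime → 1 ≤ e → Nat.totient (p ^ e) ≤ 2 * p ^ e := by
  intro p e _ _
  have := Nat.totient_le (p ^ e)
  omega

lemma totient_hlb : ∀ p e : ℕ, p.Prime → 1 ≤ e → p ^ e ≤ 2 * Nat.totient (p ^ e) := by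
  intro p e hp he
  rw [Nat.totient_prime_pow hp (by omega)]
  have h2 : p ≤ 2 * (p - 1) := by have := hp.two_le; omega
  calc p ^ e = p ^ (e - 1) * p := by
        rw [← pow_succ]; congr 1; omega
    _ ≤ p ^ (e - 1) * (2 * (p - 1)) := Nat.mul_le_mul_left _ h2
    _ = 2 * (p ^ (e - 1) * (p - 1)) := by ring

lemma totient_hinj : ∀ p₁ p₂ e : ℕ, p₁.Prime → p₂.Prime → 1 ≤ e →
    Nat.totient (p₁ ^ e) = Nat.totient (p₂ ^ e) → p₁ = p₂ := by
  intro p₁ p₂ e hp₁ hp₂ he heq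
  rcases lt_trichotomy p₁ p₂ with h | h | h
  · exact absurd heq (Nat.ne_of_lt (totient_pp_lt hp₁ hp₂ he h))
  · exact h
  · exact absurd heq.symm (Nat.ne_of_lt (totient_pp_lt hp₂ hp₁ he h))

-- ===== sigma1 =====

lemma sigma1_eq_sigma (n : ℕ) : sigma1 n = ArithmeticFunction.sigma 1 n :=
  (ArithmeticFunction.sigma_one_apply n).symm

lemma sigma1_one : sigma1 1 = 1 := by simp [sigma1]

lemma sigma1_mul : ∀ m n : ℕ, Nat.Coprime m n → sigma1 (m * n) = sigma1 m * sigma1 n := by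
  intro m n h
  simp only [sigma1_eq_sigma]
  exact ArithmeticFunction.isMultiplicative_sigma.map_mul_of_coprime h

lemma sigma1_pp (p e : ℕ) (hp : p.Prime) :
    sigma1 (p ^ e) = ∑ k ∈ Finset.range (e + 1), p ^ k := by
  rw [sigma1_eq_sigma, ArithmeticFunction.sigma_one_apply_prime_pow hp]

lemma geom_le (p : ℕ) (hp : 2 ≤ p) : ∀ e : ℕ, ∑ k ∈ Finset.range (e + 1), p ^ k ≤ 2 * p ^ e := by
  intro e
  induction e with
  | zero => simp
  | succ e ih =>
    rw [Finset.sum_range_succ]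
    have h2 : 2 * p ^ e ≤ p ^ (e + 1) := by
      rw [pow_succ]
      calc 2 * p ^ e = p ^ e * 2 := by ring
      _ ≤ p ^ e * p := Nat.mul_le_mul_left _ hp
    omega

lemma sigma1_hub : ∀ p e : ℕ, p.Prime → 1 ≤ e → sigma1 (p ^ e) ≤ 2 * p ^ e := by
  intro p e hp _
  rw [sigma1_pp p e hp]
  exact geom_le p hp.two_le e

lemma sigma1_hlb : ∀ p e : ℕ, p.Prime → 1 ≤ e → p ^ e ≤ 2 * sigma1 (p ^ e) := by
  intro p e hp _
  rw [sigma1_pp p e hp, Finset.sum_range_succ]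
  have : 0 ≤ ∑ k ∈ Finset.range e, p ^ k := Nat.zero_le _
  omega

lemma sigma1_pp_lt {p₁ p₂ e : ℕ} (hp₁ : p₁.Prime) (hp₂ : p₂.Prime) (he : 1 ≤ e)
    (h : p₁ < p₂) : sigma1 (p₁ ^ e) < sigma1 (p₂ ^ e) := by
  rw [sigma1_pp p₁ e hp₁, sigma1_pp p₂ e hp₂]
  apply Finset.sum_lt_sum
  · intro k _
    exact Nat.pow_le_pow_left h.le k
  · refine ⟨e, Finset.self_mem_range_succ e, ?_⟩
    exact Nat.pow_lt_pow_left h (by omega)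

lemma sigma1_hinj : ∀ p₁ p₂ e : ℕ, p₁.Prime → p₂.Prime → 1 ≤ e →
    sigma1 (p₁ ^ e) = sigma1 (p₂ ^ e) → p₁ = p₂ := by
  intro p₁ p₂ e hp₁ hp₂ he heq
  rcases lt_trichotomy p₁ p₂ with h | h | h
  · exact absurd heq (Nat.ne_of_lt (sigma1_pp_lt hp₁ hp₂ he h))
  · exact h
  · exact absurd heq.symm (Nat.ne_of_lt (sigma1_pp_lt hp₂ hp₁ he h))

-- ===== carmichael =====

lemma carmichael_dvd_totient (n : ℕ) (hn : 0 < n) : carmichael n ∣ n.totient := by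
  haveI : NeZero n := ⟨hn.ne'⟩
  rw [carmichael, ← ZMod.card_units_eq_totient n]
  exact Group.exponent_dvd_card

lemma cnt_carmichael_le (d : ℕ) (x : ℝ) :
    cnt carmichael d x ≤ cnt Nat.totient d x := by
  apply Finset.card_le_card
  intro n hn
  rw [Finset.mem_filter, Finset.mem_Icc] at *
  exact ⟨hn.1, dvd_trans hn.2 (carmichael_dvd_totient n (by omega))⟩

end Stmt5Aux


theorem stmt5 (a : ℕ → ℕ) (ha : a = Nat.totient ∨ a = sigma1 ∨ a = carmichael)
    (d : ℕ) (hd : 1 ≤ d) (x : ℝ) (hx : 1 ≤ x) :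
    (countIn {n : ℕ | d ∣ a n} x : ℝ) ≤
      (x / d) * (8 * BigOmega d * plog x ^ 2) ^ BigOmega d := by
  have hx0 : (0:ℝ) ≤ x := by linarith
  have htot := Stmt5Aux.main_abstract Nat.totient Nat.totient_one
    (fun m n h => Nat.totient_mul h) Stmt5Aux.totient_hub Stmt5Aux.totient_hlb Stmt5Aux.totient_hinj d hd x hx
  rcases ha with rfl | rfl | rfl
  · rw [Stmt5Aux.countIn_eq_cnt Nat.totient d x hx0]
    exact htot
  · rw [Stmt5Aux.countIn_eq_cnt sigma1 d x hx0]
    exact Stmt5Aux.main_abstract sigma1 Stmt5Aux.sigma1_one Stmt5Aux.sigma1_mul Stmt5Aux.sigma1_hub Stmt5Aux.sigma1_hlb Stmt5Aux.sigma1_hinj d hd x hx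
  · rw [Stmt5Aux.countIn_eq_cnt carmichael d x hx0]
    calc (Stmt5Aux.cnt carmichael d x : ℝ) ≤ (Stmt5Aux.cnt Nat.totient d x : ℝ) := by
          exact_mod_cast Stmt5Aux.cnt_carmichael_le d x
      _ ≤ x / d * (8 * BigOmega d * plog x ^ 2) ^ BigOmega d := htot
end

section
/- Let f : ℕ → ℕ be multiplicative (f(1) = 1 and f(mn) = f(m)·f(n) whenever gcd(m,n) = 1) with f(n) ∣ n for every n ≥ 1. Let G = {p prime : f(p) = p}, and assume that ∑_{p ∈ G, p ≤ t} (log p)/p → ∞ as t → ∞. Then (1/n)·∑_{1 ≤ m ≤ n} log f(m) → ∞ as n → ∞. -/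
open Filter

lemma plog_ge_one (x : ℝ) : 1 ≤ plog x := le_max_left _ _
lemma plog_nonneg (x : ℝ) : 0 ≤ plog x := zero_le_one.trans (plog_ge_one x)
lemma log_le_plog (x : ℝ) : Real.log x ≤ plog x := le_max_right _ _

lemma plog_le_two_sqrt (k : ℕ) (hk : 1 ≤ k) : plog (k : ℝ) ≤ 2 * Real.sqrt k := by
  have hk1 : (1:ℝ) ≤ k := by exact_mod_cast hk
  have hs1 : (1:ℝ) ≤ Real.sqrt k := by
    rw [show (1:ℝ) = Real.sqrt 1 by simp]
    exact Real.sqrt_le_sqrt hk1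
  have hlog : Real.log k ≤ 2 * Real.sqrt k := by
    have h1 : Real.log (k:ℝ) = 2 * Real.log (Real.sqrt k) := by
      rw [Real.log_sqrt (by positivity)]; ring
    have h2 := Real.log_le_sub_one_of_pos (x := Real.sqrt k) (by linarith)
    nlinarith
  exact max_le (by linarith) hlog

lemma plog_eq_log (k : ℕ) (hk : 3 ≤ k) : plog (k : ℝ) = Real.log k := by
  have h3 : (3:ℝ) ≤ k := by exact_mod_cast hk
  have he : Real.exp 1 ≤ (k:ℝ) := le_trans (by have := Real.exp_one_lt_d9; linarith) h3
  have : (1:ℝ) ≤ Real.log k := (Real.le_log_iff_exp_le (by linarith)).mpr he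
  exact max_eq_right this

lemma count_pp (p n : ℕ) :
    ((Finset.Icc 1 n).filter (fun m => p ∣ m ∧ ¬ p * p ∣ m)).card = n / p - n / (p * p) := by
  classical
  have hIcc : Finset.Icc 1 n = Finset.Ioc 0 n := rfl
  have hsub : (Finset.Ioc 0 n).filter (fun m => p * p ∣ m)
      ⊆ (Finset.Ioc 0 n).filter (fun m => p ∣ m) := by
    intro m hm
    simp only [Finset.mem_filter] at hm ⊢
    exact ⟨hm.1, dvd_trans (dvd_mul_right p p) hm.2⟩
  have hset : (Finset.Ioc 0 n).filter (fun m => p ∣ m ∧ ¬ p * p ∣ m)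
      = (Finset.Ioc 0 n).filter (fun m => p ∣ m) \
        (Finset.Ioc 0 n).filter (fun m => p * p ∣ m) := by
    ext m
    simp only [Finset.mem_filter, Finset.mem_sdiff]
    tauto
  rw [hIcc, hset, Finset.card_sdiff_of_subset hsub, Nat.Ioc_filter_dvd_card_eq_div,
    Nat.Ioc_filter_dvd_card_eq_div]

lemma dvd_f_of (f : ℕ → ℕ) (hfmul : ∀ m n : ℕ, Nat.Coprime m n → f (m * n) = f m * f n)
    (p m : ℕ) (hp : p.Prime) (hfp : f p = p) (h1 : p ∣ m) (h2 : ¬ p * p ∣ m) :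
    p ∣ f m := by
  obtain ⟨k, rfl⟩ := h1
  have hpk : ¬ p ∣ k := fun h => h2 (mul_dvd_mul_left p h)
  rw [hfmul p k ((Nat.Prime.coprime_iff_not_dvd hp).mpr hpk), hfp]
  exact dvd_mul_right p (f k)

lemma sum_plog_le (f : ℕ → ℕ) (hfmul : ∀ m n : ℕ, Nat.Coprime m n → f (m * n) = f m * f n)
    (hfdvd : ∀ n : ℕ, 1 ≤ n → f n ∣ n) (m : ℕ) (hm : 1 ≤ m) (Q : Finset ℕ)
    (hQ : ∀ p ∈ Q, 3 ≤ p ∧ p.Prime ∧ f p = p ∧ p ∣ m ∧ ¬ p * p ∣ m) :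
    ∑ p ∈ Q, plog p ≤ plog (f m) := by
  have hdvd : (∏ p ∈ Q, p) ∣ f m :=
    Finset.prod_primes_dvd (f m) (fun p hp => (hQ p hp).2.1.prime)
      (fun p hp => dvd_f_of f hfmul p m (hQ p hp).2.1 (hQ p hp).2.2.1
        (hQ p hp).2.2.2.1 (hQ p hp).2.2.2.2)
  have hfmpos : 0 < f m := Nat.pos_of_dvd_of_pos (hfdvd m hm) hm
  have hle : (∏ p ∈ Q, p) ≤ f m := Nat.le_of_dvd hfmpos hdvd
  have hppos : ∀ p ∈ Q, 0 < p := fun p hp => lt_of_lt_of_le (by norm_num) (hQ p hp).1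
  calc ∑ p ∈ Q, plog p = ∑ p ∈ Q, Real.log p :=
        Finset.sum_congr rfl (fun p hp => plog_eq_log p (hQ p hp).1)
    _ = Real.log (∏ p ∈ Q, (p:ℝ)) :=
        (Real.log_prod (s := Q) (f := fun p => (p:ℝ)) (fun p hp => by exact_mod_cast (hppos p hp).ne')).symm
    _ = Real.log ((∏ p ∈ Q, p : ℕ) : ℝ) := by rw [Nat.cast_prod]
    _ ≤ Real.log (f m) := by
        apply Real.log_le_log
        · exact_mod_cast Finset.prod_pos hppos
        · exact_mod_cast hle
    _ ≤ plog (f m) := log_le_plog _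


open scoped Classical in
theorem stmt14 (f : ℕ → ℕ)
    (hf1 : f 1 = 1) (hfmul : ∀ m n : ℕ, Nat.Coprime m n → f (m * n) = f m * f n)
    (hfdvd : ∀ n : ℕ, 1 ≤ n → f n ∣ n)
    (hG : Filter.Tendsto
      (fun t : ℝ => ∑ p ∈ (Finset.Icc 1 ⌊t⌋₊).filter (fun p => p.Prime ∧ f p = p),
        plog p / p) Filter.atTop Filter.atTop) :
    Filter.Tendsto (fun n : ℕ => (∑ m ∈ Finset.Icc 1 n, plog (f m)) / n)
      Filter.atTop Filter.atTop := by
  set C : ℝ := 2 * ∑' k : ℕ, ((k:ℝ) ^ (3/2 : ℝ))⁻¹ with hCdef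
  set T : ℝ → ℝ := fun t => ∑ p ∈ (Finset.Icc 1 ⌊t⌋₊).filter (fun p => p.Prime ∧ f p = p),
      plog p / p with hTdef
  have main : ∀ n : ℕ, 1 ≤ n →
      T (Real.sqrt n) - (C + 3) ≤ (∑ m ∈ Finset.Icc 1 n, plog (f m)) / n := by
    intro n hn
    set M : ℕ := ⌊Real.sqrt n⌋₊ with hMdef
    set P : Finset ℕ := (Finset.Icc 3 M).filter (fun p => p.Prime ∧ f p = p) with hPdef
    have hmemP : ∀ p ∈ P, 3 ≤ p ∧ p ≤ M ∧ p.Prime ∧ f p = p := by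
      intro p hp
      simp only [hPdef, Finset.mem_filter, Finset.mem_Icc] at hp
      exact ⟨hp.1.1, hp.1.2, hp.2.1, hp.2.2⟩
    have hN1 : (1:ℝ) ≤ (n:ℝ) := by exact_mod_cast hn
    have hN0 : (0:ℝ) < (n:ℝ) := by linarith
    -- Step 1: swap
    have hswap : ∑ p ∈ P, plog p * ((n / p - n / (p*p) : ℕ) : ℝ)
        ≤ ∑ m ∈ Finset.Icc 1 n, plog (f m) := by
      have h1 : ∀ p ∈ P, plog (p:ℝ) * ((n / p - n / (p*p) : ℕ) : ℝ)
          = ∑ m ∈ (Finset.Icc 1 n).filter (fun m => p ∣ m ∧ ¬ p*p ∣ m), plog (p:ℝ) := by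
        intro p hp
        rw [Finset.sum_const, ← count_pp p n, nsmul_eq_mul]
        ring
      rw [Finset.sum_congr rfl h1]
      simp only [Finset.sum_filter]
      rw [Finset.sum_comm]
      apply Finset.sum_le_sum
      intro m hm
      have hm1 : 1 ≤ m := (Finset.mem_Icc.mp hm).1
      calc ∑ p ∈ P, (if p ∣ m ∧ ¬ p*p ∣ m then plog (p:ℝ) else 0)
          = ∑ p ∈ P.filter (fun p => p ∣ m ∧ ¬ p*p ∣ m), plog (p:ℝ) :=
            (Finset.sum_filter _ _).symm
        _ ≤ plog (f m) := by
            apply sum_plog_le f hfmul hfdvd m hm1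
            intro p hp
            simp only [Finset.mem_filter] at hp
            obtain ⟨hpP, hd, hnd⟩ := hp
            obtain ⟨h3, _, hpr, hfp⟩ := hmemP p hpP
            exact ⟨h3, hpr, hfp, hd, hnd⟩
    -- Step 2: count lower bound
    have hcount : ∀ p ∈ P, (n:ℝ)/p - (n:ℝ)/((p:ℝ)*(p:ℝ)) - 1 ≤ ((n / p - n / (p*p) : ℕ) : ℝ) := by
      intro p hp
      obtain ⟨h3, _, _, _⟩ := hmemP p hp
      have hp0 : 0 < p := by omega
      have hple : n/(p*p) ≤ n/p :=
        Nat.div_le_div_left (Nat.le_mul_of_pos_left p hp0) hp0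
      rw [Nat.cast_sub hple]
      have h1 : (n:ℝ)/p - 1 ≤ ((n/p : ℕ):ℝ) := by
        have hfl : (n/p : ℕ) = ⌊(n:ℝ)/(p:ℝ)⌋₊ := by
          rw [show ((p:ℝ)) = ((p:ℕ):ℝ) from rfl, Nat.floor_div_natCast, Nat.floor_natCast]
        rw [hfl]
        exact (Nat.sub_one_lt_floor _).le
      have h2 : ((n/(p*p) : ℕ):ℝ) ≤ (n:ℝ)/((p:ℝ)*(p:ℝ)) := by
        have := Nat.cast_div_le (α := ℝ) (m := n) (n := p*p)
        push_cast at this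
        exact this
      linarith
    -- Step 3: split
    have hsplit : ∀ p ∈ P, plog (p:ℝ) * ((n:ℝ)/p - (n:ℝ)/((p:ℝ)*(p:ℝ)) - 1)
        = (n:ℝ) * (plog p / p) - (n:ℝ) * (plog p / ((p:ℝ)*(p:ℝ))) - plog (p:ℝ) := by
      intro p hp
      obtain ⟨h3, _, _, _⟩ := hmemP p hp
      have hp0 : (p:ℝ) ≠ 0 := by positivity
      field_simp
    -- Step 4a: second-moment bound
    have hC2 : ∑ p ∈ P, plog (p:ℝ) / ((p:ℝ)*(p:ℝ)) ≤ C := by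
      have hterm : ∀ p ∈ P, plog (p:ℝ) / ((p:ℝ)*(p:ℝ)) ≤ 2 * ((p:ℝ) ^ (3/2 : ℝ))⁻¹ := by
        intro p hp
        obtain ⟨h3, _, _, _⟩ := hmemP p hp
        have hp1 : (1:ℝ) ≤ (p:ℝ) := by exact_mod_cast (by omega : 1 ≤ p)
        have hp0 : (0:ℝ) < (p:ℝ) := by linarith
        have hplog : plog (p:ℝ) ≤ 2 * Real.sqrt p := plog_le_two_sqrt p (by omega)
        have hkey : Real.sqrt p / ((p:ℝ)*(p:ℝ)) = ((p:ℝ) ^ (3/2 : ℝ))⁻¹ := by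
          rw [Real.sqrt_eq_rpow, show (p:ℝ)*(p:ℝ) = (p:ℝ) ^ (2:ℝ) by
            rw [show (2:ℝ) = ((2:ℕ):ℝ) by norm_num, Real.rpow_natCast]; ring]
          rw [← Real.rpow_sub hp0, show (1/(2:ℝ) - 2) = -(3/2) by norm_num,
            Real.rpow_neg hp0.le]
        calc plog (p:ℝ) / ((p:ℝ)*(p:ℝ)) ≤ (2 * Real.sqrt p) / ((p:ℝ)*(p:ℝ)) := by
              gcongr
          _ = 2 * ((p:ℝ) ^ (3/2 : ℝ))⁻¹ := by rw [mul_div_assoc, hkey]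
      calc ∑ p ∈ P, plog (p:ℝ) / ((p:ℝ)*(p:ℝ)) ≤ ∑ p ∈ P, 2 * ((p:ℝ) ^ (3/2:ℝ))⁻¹ :=
            Finset.sum_le_sum hterm
        _ = 2 * ∑ p ∈ P, ((p:ℝ) ^ (3/2:ℝ))⁻¹ := by rw [Finset.mul_sum]
        _ ≤ C := by
            rw [hCdef]
            apply mul_le_mul_of_nonneg_left ?_ (by norm_num)
            apply Summable.sum_le_tsum P (fun k _ => by positivity)
            exact Real.summable_nat_rpow_inv.mpr (by norm_num)
    -- Step 4b: first-moment bound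
    have hB : ∑ p ∈ P, plog (p:ℝ) ≤ 2 * (n:ℝ) := by
      have hMle : (M:ℝ) ≤ Real.sqrt n := Nat.floor_le (Real.sqrt_nonneg _)
      have hsn : Real.sqrt n ≤ (n:ℝ) := by
        nlinarith [Real.sq_sqrt hN0.le, Real.sqrt_nonneg (n:ℝ)]
      have hterm : ∀ p ∈ P, plog (p:ℝ) ≤ 2 * Real.sqrt n := by
        intro p hp
        obtain ⟨h3, hpM, _, _⟩ := hmemP p hp
        have hpn : (p:ℝ) ≤ Real.sqrt n := le_trans (by exact_mod_cast hpM) hMle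
        calc plog (p:ℝ) ≤ 2 * Real.sqrt p := plog_le_two_sqrt p (by omega)
          _ ≤ 2 * Real.sqrt n := by
              have : Real.sqrt (p:ℝ) ≤ Real.sqrt n := Real.sqrt_le_sqrt (hpn.trans hsn)
              linarith
      have hcard : (P.card : ℝ) ≤ Real.sqrt n := by
        have h1 : P.card ≤ (Finset.Icc 3 M).card := Finset.card_filter_le _ _
        have h2 : (Finset.Icc 3 M).card ≤ M := by
          rw [Nat.card_Icc]; omega
        calc (P.card : ℝ) ≤ (M:ℝ) := by exact_mod_cast h1.trans h2
          _ ≤ Real.sqrt n := hMle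
      calc ∑ p ∈ P, plog (p:ℝ) ≤ P.card • (2 * Real.sqrt n) :=
            Finset.sum_le_card_nsmul P _ _ hterm
        _ = (P.card : ℝ) * (2 * Real.sqrt n) := by rw [nsmul_eq_mul]
        _ ≤ Real.sqrt n * (2 * Real.sqrt n) :=
            mul_le_mul_of_nonneg_right hcard (by positivity)
        _ = 2 * (Real.sqrt n * Real.sqrt n) := by ring
        _ = 2 * (n:ℝ) := by rw [Real.mul_self_sqrt hN0.le]
    -- Step 5: relate T (√n) to the sum over P
    have hT : T (Real.sqrt n) ≤ (∑ p ∈ P, plog (p:ℝ) / p) + 1 := by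
      have hTn : T (Real.sqrt n) = ∑ p ∈ (Finset.Icc 1 M).filter (fun p => p.Prime ∧ f p = p),
          plog (p:ℝ) / p := by
        simp only [hTdef, hMdef]
      rw [hTn]
      set s := (Finset.Icc 1 M).filter (fun p => p.Prime ∧ f p = p) with hsdef
      rw [← Finset.sum_filter_add_sum_filter_not s (fun p => 3 ≤ p)]
      have hnonneg : ∀ p : ℕ, (0:ℝ) ≤ plog (p:ℝ) / p := fun p =>
        div_nonneg (plog_nonneg _) (by positivity)
      have hA : ∑ p ∈ s.filter (fun p => 3 ≤ p), plog (p:ℝ) / p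
          ≤ ∑ p ∈ P, plog (p:ℝ) / p := by
        apply Finset.sum_le_sum_of_subset_of_nonneg
        · intro p hp
          simp only [hsdef, hPdef, Finset.mem_filter, Finset.mem_Icc] at hp ⊢
          exact ⟨⟨hp.2, hp.1.1.2⟩, hp.1.2⟩
        · intro p _ _; exact hnonneg p
      have hBB : ∑ p ∈ s.filter (fun p => ¬ 3 ≤ p), plog (p:ℝ) / p ≤ 1 := by
        have hsub : s.filter (fun p => ¬ 3 ≤ p) ⊆ {2} := by
          intro p hp
          simp only [hsdef, Finset.mem_filter, Finset.mem_Icc] at hp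
          have := hp.1.2.1.two_le
          simp only [Finset.mem_singleton]
          omega
        calc ∑ p ∈ s.filter (fun p => ¬ 3 ≤ p), plog (p:ℝ) / p
            ≤ ∑ p ∈ ({2} : Finset ℕ), plog (p:ℝ) / p :=
              Finset.sum_le_sum_of_subset_of_nonneg hsub (fun p _ _ => hnonneg p)
          _ = plog (2:ℝ) / 2 := by norm_num
          _ ≤ 1 := by
              have h2 : Real.log 2 ≤ 1 := by
                have := Real.log_le_sub_one_of_pos (x := (2:ℝ)) (by norm_num)
                linarith
              have : plog (2:ℝ) ≤ 1 := max_le le_rfl h2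
              linarith
      linarith
    -- Step 6: assemble
    have hmain2 : (n:ℝ) * (∑ p ∈ P, plog (p:ℝ) / p) - (n:ℝ) * C - 2 * (n:ℝ)
        ≤ ∑ m ∈ Finset.Icc 1 n, plog (f m) := by
      have h1 : ∑ p ∈ P, plog (p:ℝ) * ((n:ℝ)/p - (n:ℝ)/((p:ℝ)*(p:ℝ)) - 1)
          ≤ ∑ p ∈ P, plog (p:ℝ) * ((n / p - n / (p*p) : ℕ) : ℝ) := by
        apply Finset.sum_le_sum
        intro p hp
        exact mul_le_mul_of_nonneg_left (hcount p hp) (plog_nonneg _)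
      have h2 : ∑ p ∈ P, plog (p:ℝ) * ((n:ℝ)/p - (n:ℝ)/((p:ℝ)*(p:ℝ)) - 1)
          = (n:ℝ) * (∑ p ∈ P, plog (p:ℝ) / p)
            - (n:ℝ) * (∑ p ∈ P, plog (p:ℝ) / ((p:ℝ)*(p:ℝ)))
            - ∑ p ∈ P, plog (p:ℝ) := by
        rw [Finset.sum_congr rfl hsplit]
        rw [Finset.sum_sub_distrib, Finset.sum_sub_distrib, Finset.mul_sum, Finset.mul_sum]
      have h3 : (n:ℝ) * (∑ p ∈ P, plog (p:ℝ) / ((p:ℝ)*(p:ℝ))) ≤ (n:ℝ) * C :=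
        mul_le_mul_of_nonneg_left hC2 hN0.le
      linarith [hswap]
    rw [le_div_iff₀ hN0]
    calc (T (Real.sqrt n) - (C + 3)) * n
        ≤ ((∑ p ∈ P, plog (p:ℝ) / p) + 1 - (C + 3)) * n :=
          mul_le_mul_of_nonneg_right (by linarith [hT]) hN0.le
      _ = (n:ℝ) * (∑ p ∈ P, plog (p:ℝ) / p) - (n:ℝ) * C - 2 * (n:ℝ) := by ring
      _ ≤ ∑ m ∈ Finset.Icc 1 n, plog (f m) := hmain2
  -- final limit argument
  have hsq : Tendsto (fun n : ℕ => Real.sqrt n) atTop atTop := by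
    have h1 : Tendsto Real.sqrt atTop atTop := by
      rw [show Real.sqrt = fun x : ℝ => x ^ (1/2 : ℝ) from funext Real.sqrt_eq_rpow]
      exact tendsto_rpow_atTop (by norm_num)
    exact h1.comp tendsto_natCast_atTop_atTop
  have hcomp : Tendsto (fun n : ℕ => T (Real.sqrt n) - (C + 3)) atTop atTop := by
    simpa [sub_eq_add_neg] using
      tendsto_atTop_add_const_right atTop (-(C + 3)) (hG.comp hsq)
  apply tendsto_atTop_mono' atTop ?_ hcomp
  filter_upwards [eventually_ge_atTop 1] with n hn
  exact main n hn
end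

section
/- Fix an integer base g ≥ 2. Let f : ℕ → ℕ be multiplicative (f(1) = 1 and f(mn) = f(m)·f(n) whenever gcd(m,n) = 1) with f(n) ∣ n for every n ≥ 1. Suppose the set G = {p prime : f(p) = p} is finite and that f(p^k) = 1 for every prime p ∉ G and every k ≥ 1. Then the concatenated digit sequence of f is NOT g-normal: there exist k ≥ 1 and a word w ∈ {0,…,g−1}^k such that (1/N)·#{j : 0 ≤ j ≤ N−k and D_{j+i} = w_i for all 0 ≤ i < k} does not tend to g^{−k} as N → ∞. -/
open Filter

namespace NN15T

/-! ### List-level lemmas about the concatenated digit sequence -/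

def Lst (g : ℕ) (f : ℕ → ℕ) (N : ℕ) : List ℕ :=
  (List.range N).flatMap (fun i => Nat.digits g (f (i + 1)))

lemma Lst_add (g : ℕ) (f : ℕ → ℕ) (a b : ℕ) :
    Lst g f (a + b) = Lst g f a ++ (List.range b).flatMap (fun i => Nat.digits g (f (a + i + 1))) := by
  unfold Lst
  rw [List.range_add, List.flatMap_append, List.flatMap_map]

lemma Lst_succ (g : ℕ) (f : ℕ → ℕ) (a : ℕ) :
    Lst g f (a + 1) = Lst g f a ++ Nat.digits g (f (a + 1)) := by
  rw [Lst_add]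
  simp [List.flatMap, List.range_succ]

section
variable (g : ℕ) (f : ℕ → ℕ) (hfpos : ∀ n : ℕ, n ≠ 0 → f n ≠ 0)

include hfpos in
lemma length_lt_length_Lst_succ (a : ℕ) : (Lst g f a).length < (Lst g f (a + 1)).length := by
  rw [Lst_succ, List.length_append]
  have : Nat.digits g (f (a + 1)) ≠ [] := by
    rw [Nat.digits_ne_nil_iff_ne_zero]
    exact hfpos _ (Nat.succ_ne_zero a)
  have : 0 < (Nat.digits g (f (a + 1))).length := List.length_pos_iff.mpr this
  omega

include hfpos in
lemma length_Lst_strictMono : StrictMono (fun N => (Lst g f N).length) :=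
  strictMono_nat_of_lt_succ (length_lt_length_Lst_succ g f hfpos)

include hfpos in
lemma le_length_Lst (N : ℕ) : N ≤ (Lst g f N).length := by
  induction N with
  | zero => simp
  | succ n ih => have := length_lt_length_Lst_succ g f hfpos n; omega

lemma Lst_prefix {a b : ℕ} (hab : a ≤ b) : Lst g f a <+: Lst g f b := by
  obtain ⟨c, rfl⟩ := Nat.le.dest hab
  rw [Lst_add]
  exact List.prefix_append _ _

include hfpos in
lemma digitSeq_eq_getElem (N j : ℕ) (hj : j < (Lst g f N).length) :
    digitSeq g f j = (Lst g f N)[j] := by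
  have h1 : j < (Lst g f (j + 1)).length :=
    lt_of_lt_of_le (Nat.lt_succ_self j) (le_length_Lst g f hfpos (j + 1))
  have h0 : digitSeq g f j = (Lst g f (j + 1)).getD j 0 := rfl
  rw [h0, List.getD_eq_getElem _ _ h1]
  rcases le_total (j + 1) N with h | h
  · exact (Lst_prefix g f h).getElem h1
  · exact ((Lst_prefix g f h).getElem hj).symm

lemma length_Lst_eq_sum (N : ℕ) :
    (Lst g f N).length = ∑ i ∈ Finset.range N, (Nat.digits g (f (i + 1))).length := by
  induction N with
  | zero => simp [Lst]
  | succ n ih => rw [Lst_succ, List.length_append, ih, Finset.sum_range_succ]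

end

/-! ### Arithmetic lemmas -/

lemma f_eq_one (f : ℕ → ℕ) (hf1 : f 1 = 1)
    (hfmul : ∀ m n : ℕ, Nat.Coprime m n → f (m * n) = f m * f n)
    (hsmall : ∀ p : ℕ, p.Prime → f p ≠ p → ∀ k : ℕ, 1 ≤ k → f (p ^ k) = 1) :
    ∀ u : ℕ, u ≠ 0 → (∀ p : ℕ, p.Prime → p ∣ u → f p ≠ p) → f u = 1 := by
  intro u
  induction u using Nat.strong_induction_on with
  | _ u ih =>
    intro hu hp
    rcases eq_or_ne u 1 with rfl | hu1
    · exact hf1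
    · set p := u.minFac with hpdef
      have hpp : p.Prime := Nat.minFac_prime hu1
      have hpd : p ∣ u := Nat.minFac_dvd u
      set k := u.factorization p with hk
      set w := u / p ^ k with hw
      have hw_eq : p ^ k * w = u := Nat.ordProj_mul_ordCompl_eq_self u p
      have hk1 : 1 ≤ k := (Nat.Prime.pow_dvd_iff_le_factorization hpp hu).mp
        (by simpa using hpd)
      have hcop : Nat.Coprime (p ^ k) w :=
        Nat.Coprime.pow_left _ (Nat.coprime_ordCompl hpp hu)
      have hwne : w ≠ 0 := by
        intro h; rw [h, mul_zero] at hw_eq; exact hu hw_eq.symm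
      have hwlt : w < u := by
        have hp2 : 2 ≤ p ^ k := le_trans hpp.two_le (Nat.le_self_pow (by omega) p)
        calc w < p ^ k * w := by
              have := Nat.pos_of_ne_zero hwne; nlinarith
          _ = u := hw_eq
      have : f u = f (p ^ k) * f w := by rw [← hw_eq]; exact hfmul _ _ hcop
      rw [this, hsmall p hpp (hp p hpp hpd) k hk1, one_mul]
      exact ih w hwlt hwne (fun q hq hqd => hp q hq (hqd.trans (Dvd.intro_left _ hw_eq)))

def S (G : Finset ℕ) (n : ℕ) : ℕ := ∏ p ∈ G, p ^ n.factorization p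

section
variable {G : Finset ℕ} (hGp : ∀ p ∈ G, p.Prime)

include hGp in
lemma S_ne_zero (n : ℕ) : S G n ≠ 0 :=
  Finset.prod_ne_zero_iff.mpr (fun p hp => pow_ne_zero _ (hGp p hp).pos.ne')

include hGp in
lemma S_factorization (n q : ℕ) :
    (S G n).factorization q = if q ∈ G then n.factorization q else 0 := by
  unfold S
  rw [Nat.factorization_prod (fun p hp => pow_ne_zero _ (hGp p hp).pos.ne')]
  rw [Finsupp.finset_sum_apply]
  have : ∀ p ∈ G, ((p ^ n.factorization p).factorization) q
      = if p = q then n.factorization q else 0 := by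
    intro p hp
    rw [(hGp p hp).factorization_pow, Finsupp.single_apply]
    split
    · subst q; rfl
    · rfl
  rw [Finset.sum_congr rfl this, Finset.sum_ite_eq' G q (fun _ => n.factorization q)]

include hGp in
lemma S_dvd (n : ℕ) (hn : n ≠ 0) : S G n ∣ n := by
  rw [← Nat.factorization_le_iff_dvd (S_ne_zero hGp n) hn]
  intro q
  rw [S_factorization hGp]
  split <;> simp

include hGp in
lemma not_dvd_cofactor (n : ℕ) (hn : n ≠ 0) {p : ℕ} (hp : p ∈ G) : ¬ p ∣ (n / S G n) := by
  have hS := S_dvd hGp n hn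
  have hmul : S G n * (n / S G n) = n := Nat.mul_div_cancel' hS
  have hune : n / S G n ≠ 0 := by
    intro h; rw [h, mul_zero] at hmul; exact hn hmul.symm
  have hfac : n.factorization p = n.factorization p + (n / S G n).factorization p := by
    conv_lhs => rw [← hmul]
    rw [Nat.factorization_mul (S_ne_zero hGp n) hune]
    simp [S_factorization hGp n p, hp]
  have h0 : (n / S G n).factorization p = 0 := by omega
  intro hd
  have : 1 ≤ (n / S G n).factorization p := by
    exact (Nat.Prime.pow_dvd_iff_le_factorization (hGp p hp) hune).mp (by rw [pow_one]; exact hd)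
  omega

include hGp in
lemma coprime_S_cofactor (n : ℕ) (hn : n ≠ 0) : Nat.Coprime (S G n) (n / S G n) := by
  unfold S
  rw [Nat.coprime_prod_left_iff]
  intro p hp
  exact Nat.Coprime.pow_left _
    (((hGp p hp).coprime_iff_not_dvd).mpr (not_dvd_cofactor hGp n hn hp))

include hGp in
lemma f_eq_f_S (f : ℕ → ℕ) (hf1 : f 1 = 1)
    (hfmul : ∀ m n : ℕ, Nat.Coprime m n → f (m * n) = f m * f n)
    (hsmall : ∀ p : ℕ, p.Prime → f p ≠ p → ∀ k : ℕ, 1 ≤ k → f (p ^ k) = 1)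
    (hGmem : ∀ p : ℕ, p.Prime → f p = p → p ∈ G)
    (n : ℕ) (hn : n ≠ 0) : f n = f (S G n) := by
  have hS := S_dvd hGp n hn
  have hmul : S G n * (n / S G n) = n := Nat.mul_div_cancel' hS
  have hune : n / S G n ≠ 0 := by
    intro h; rw [h, mul_zero] at hmul; exact hn hmul.symm
  have : f n = f (S G n) * f (n / S G n) := by
    conv_lhs => rw [← hmul]
    exact hfmul _ _ (coprime_S_cofactor hGp n hn)
  rw [this, f_eq_one f hf1 hfmul hsmall _ hune, mul_one]
  intro q hq hqd hfq
  exact not_dvd_cofactor hGp n hn (hGmem q hq hfq) hqd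

end

lemma val_eq {p t M m j : ℕ} (hp : p.Prime) (ht : t ≠ 0)
    (hMd : p ^ (Nat.log p t + 1) ∣ M) (hj : j < t) :
    (M * m + (j + 1)).factorization p = (j + 1).factorization p := by
  set A := Nat.log p t + 1 with hA
  set v := (j + 1).factorization p with hv
  have hvA : v + 1 ≤ A := by
    have h1 : p ^ v ∣ j + 1 := Nat.ordProj_dvd _ _
    have h2 : p ^ v ≤ j + 1 := Nat.le_of_dvd (Nat.succ_pos j) h1
    have h3 : p ^ v ≤ t := le_trans h2 (by omega)
    have := (Nat.le_log_iff_pow_le hp.one_lt ht).mpr h3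
    omega
  have hdvdMm : ∀ w : ℕ, w ≤ A → p ^ w ∣ M * m :=
    fun w hw => Dvd.dvd.mul_right ((pow_dvd_pow p hw).trans hMd) m
  have hne : M * m + (j + 1) ≠ 0 := by positivity
  apply le_antisymm
  · by_contra hgt
    push_neg at hgt
    have : p ^ (v + 1) ∣ M * m + (j + 1) :=
      (Nat.Prime.pow_dvd_iff_le_factorization hp hne).mpr hgt
    have hj1 : p ^ (v + 1) ∣ j + 1 := by
      have h2 := hdvdMm (v + 1) hvA
      have := Nat.dvd_sub this h2
      simpa using this
    exact Nat.pow_succ_factorization_not_dvd (Nat.succ_ne_zero j) hp hj1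
  · apply (Nat.Prime.pow_dvd_iff_le_factorization hp hne).mp
    exact Nat.dvd_add (hdvdMm v (by omega)) (Nat.ordProj_dvd _ _)

lemma sum_factorization_le {p : ℕ} (hp : p.Prime) (N : ℕ) :
    ∑ i ∈ Finset.range N, (i + 1).factorization p ≤ N := by
  haveI : Fact p.Prime := ⟨hp⟩
  have h1 : ∑ i ∈ Finset.range N, (i + 1).factorization p = padicValNat p (Nat.factorial N) := by
    induction N with
    | zero => simp
    | succ n ih =>
      rw [Finset.sum_range_succ, ih, Nat.factorial_succ,
        padicValNat.mul (Nat.succ_ne_zero n) (Nat.factorial_ne_zero n),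
        Nat.factorization_def _ hp]
      ring
  rw [h1]
  have h2 : (p - 1) * padicValNat p (Nat.factorial N) = N - (p.digits N).sum :=
    sub_one_mul_padicValNat_factorial N
  have h3 : padicValNat p (Nat.factorial N) ≤ (p - 1) * padicValNat p (Nat.factorial N) :=
    Nat.le_mul_of_pos_left _ (by have := hp.two_le; omega)
  omega

section
variable {G : Finset ℕ} (hGp : ∀ p ∈ G, p.Prime) {g : ℕ} (hg : 1 < g)

include hg in
lemma S_le_pow (n : ℕ) :
    S G n ≤ g ^ (∑ p ∈ G, (Nat.log g p + 1) * n.factorization p) := by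
  unfold S
  rw [← Finset.prod_pow_eq_pow_sum]
  apply Finset.prod_le_prod'
  intro p hp
  rw [pow_mul]
  apply Nat.pow_le_pow_left
  exact le_of_lt (Nat.lt_pow_succ_log_self hg p)

include hg in
lemma log_S_le (n : ℕ) :
    Nat.log g (S G n) ≤ ∑ p ∈ G, (Nat.log g p + 1) * n.factorization p := by
  calc Nat.log g (S G n) ≤ Nat.log g (g ^ (∑ p ∈ G, (Nat.log g p + 1) * n.factorization p)) :=
        Nat.log_mono_right (S_le_pow hg n)
    _ = _ := Nat.log_pow hg _

end

end NN15T

set_option maxHeartbeats 1000000 in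
theorem stmt15 (g : ℕ) (hg : 2 ≤ g) (f : ℕ → ℕ)
    (hf1 : f 1 = 1) (hfmul : ∀ m n : ℕ, Nat.Coprime m n → f (m * n) = f m * f n)
    (hfdvd : ∀ n : ℕ, 1 ≤ n → f n ∣ n)
    (hGfin : {p : ℕ | p.Prime ∧ f p = p}.Finite)
    (hsmall : ∀ p : ℕ, p.Prime → f p ≠ p → ∀ k : ℕ, 1 ≤ k → f (p ^ k) = 1) :
    ¬ IsNormal g (digitSeq g f) := by
  intro hnorm
  classical
  have hg1 : 1 < g := hg
  have hfpos : ∀ n : ℕ, n ≠ 0 → f n ≠ 0 := by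
    intro n hn h0
    have := hfdvd n (Nat.one_le_iff_ne_zero.mpr hn)
    rw [h0] at this
    exact hn (Nat.eq_zero_of_zero_dvd this)
  set G : Finset ℕ := hGfin.toFinset with hGdef
  have hGp : ∀ p ∈ G, p.Prime := fun p hp => ((hGfin.mem_toFinset).mp hp).1
  have hGmem : ∀ p : ℕ, p.Prime → f p = p → p ∈ G :=
    fun p h1 h2 => hGfin.mem_toFinset.mpr ⟨h1, h2⟩
  -- constants
  set q : ℕ := ∏ p ∈ G, p with hqdef
  set r : ℕ := G.card with hrdef
  set C : ℕ := 1 + ∑ p ∈ G, (Nat.log g p + 1) with hCdef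
  have hq1 : 1 ≤ q := Finset.one_le_prod' (fun p hp => (hGp p hp).one_lt.le)
  have hC1 : 1 ≤ C := by omega
  -- choose t large
  obtain ⟨t, ht1, htbig⟩ : ∃ t : ℕ, 1 ≤ t ∧ 8 * C * q * t ^ r < 2 ^ t := by
    have h0 : Tendsto (fun n : ℕ => (n : ℝ) ^ r / 2 ^ n) atTop (nhds 0) :=
      tendsto_pow_const_div_const_pow_of_one_lt r (by norm_num)
    have hpos : (0:ℝ) < 1 / (8 * C * q + 1) := by positivity
    have hev : ∀ᶠ n : ℕ in atTop, (n:ℝ) ^ r / 2 ^ n < 1 / (8 * (C:ℝ) * q + 1) :=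
      h0.eventually (eventually_lt_nhds hpos)
    obtain ⟨t, hlt, ht1⟩ := (hev.and (eventually_ge_atTop 1)).exists
    refine ⟨t, ht1, ?_⟩
    have h2 : (0:ℝ) < 2 ^ t := by positivity
    have hq0 : (0:ℝ) < (8 * (C:ℝ) * q + 1) := by positivity
    rw [div_lt_div_iff₀ h2 hq0] at hlt
    have hcast : ((8 * C * q * t ^ r : ℕ) : ℝ) < (2:ℝ) ^ t := by
      push_cast
      nlinarith [pow_nonneg (by positivity : (0:ℝ) ≤ (t:ℝ)) r]
    exact_mod_cast hcast
  have ht0 : t ≠ 0 := by omega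
  -- the modulus M
  set M : ℕ := ∏ p ∈ G, p ^ (Nat.log p t + 1) with hMdef
  have hM1 : 1 ≤ M :=
    Finset.one_le_prod' (fun p hp => Nat.one_le_pow _ _ (hGp p hp).pos)
  have hMle : M ≤ q * t ^ r := by
    have h1 : ∀ p ∈ G, p ^ (Nat.log p t + 1) ≤ p * t := by
      intro p hp
      rw [pow_succ, mul_comm]
      exact Nat.mul_le_mul_left p (Nat.pow_log_le_self p ht0)
    calc M ≤ ∏ p ∈ G, (p * t) := Finset.prod_le_prod' h1
      _ = q * t ^ r := by rw [Finset.prod_mul_distrib, Finset.prod_const, hqdef, hrdef]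
  -- the word W
  set W : List ℕ := NN15T.Lst g f t with hWdef
  set L : ℕ → ℕ := fun N => (NN15T.Lst g f N).length with hLdef
  have hWlen : t ≤ W.length := NN15T.le_length_Lst g f hfpos t
  have hWne : W ≠ [] := by
    have : 0 < W.length := by omega
    exact List.ne_nil_of_length_pos this
  have hWlt : ∀ d ∈ W, d < g := by
    intro d hd
    rw [hWdef, NN15T.Lst, List.mem_flatMap] at hd
    obtain ⟨i, _, hdi⟩ := hd
    exact Nat.digits_lt_base hg1 hdi
  -- f is periodic along the progression
  have hfper : ∀ m' j : ℕ, j < t → f (M * m' + (j + 1)) = f (j + 1) := by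
    intro m' j hj
    have hSval : NN15T.S G (M * m' + (j + 1)) = NN15T.S G (j + 1) := by
      apply Finset.prod_congr rfl
      intro p hp
      congr 1
      exact NN15T.val_eq (hGp p hp) ht0
        (Finset.dvd_prod_of_mem (fun p => p ^ (Nat.log p t + 1)) hp) hj
    have h1 : f (M * m' + (j + 1)) = f (NN15T.S G (M * m' + (j + 1))) :=
      NN15T.f_eq_f_S hGp f hf1 hfmul hsmall hGmem _ (by positivity)
    have h2 : f (j + 1) = f (NN15T.S G (j + 1)) :=
      NN15T.f_eq_f_S hGp f hf1 hfmul hsmall hGmem _ (Nat.succ_ne_zero j)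
    rw [h1, hSval, ← h2]
  -- block structure
  have hblock : ∀ m' : ℕ, NN15T.Lst g f (M * m' + t) = NN15T.Lst g f (M * m') ++ W := by
    intro m'
    rw [NN15T.Lst_add]
    congr 1
    rw [hWdef]
    unfold NN15T.Lst
    simp only [List.flatMap]
    congr 1
    apply List.map_congr_left
    intro i hi
    rw [List.mem_range] at hi
    rw [show M * m' + i + 1 = M * m' + (i + 1) by omega, hfper m' i hi]
  -- occurrence lower bound
  have hocc : ∀ N : ℕ, t ≤ N →
      (N - t) / M + 1 ≤ occCount (digitSeq g f) W (L N) := by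
    intro N htN
    set K : ℕ := (N - t) / M + 1 with hKdef
    set φ : ℕ → ℕ := fun m' => L (M * m') with hphidef
    have hφmono : StrictMono φ := by
      intro a b hab
      exact NN15T.length_Lst_strictMono g f hfpos
        (mul_lt_mul_of_pos_left hab (show 0 < M by omega))
    have hmN : ∀ m' : ℕ, m' < K → M * m' + t ≤ N := by
      intro m' hm'
      have h1 : m' ≤ (N - t) / M := by omega
      have h2 : M * m' ≤ M * ((N - t) / M) := Nat.mul_le_mul_left M h1
      have h3 : M * ((N - t) / M) ≤ N - t := Nat.mul_div_le (N - t) M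
      omega
    have hsub : φ '' (Finset.range K : Set ℕ) ⊆
        {j : ℕ | j + W.length ≤ L N ∧ ∀ i < W.length, digitSeq g f (j + i) = W.getD i 0} := by
      rintro _ ⟨m', hm', rfl⟩
      have hm'K : m' < K := by simpa using hm'
      have hMN := hmN m' hm'K
      have hlen : L (M * m' + t) = φ m' + W.length := by
        show (NN15T.Lst g f (M * m' + t)).length = _
        rw [hblock m', List.length_append]
      constructor
      · show φ m' + W.length ≤ L N
        rw [← hlen]
        exact (NN15T.Lst_prefix g f hMN).length_le
      · intro i hi
        have hilt : φ m' + i < (NN15T.Lst g f (M * m' + t)).length := by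
          show φ m' + i < L (M * m' + t)
          omega
        rw [NN15T.digitSeq_eq_getElem g f hfpos (M * m' + t) _ hilt]
        have hgetD : W.getD i 0 = W[i]'(hi) := List.getD_eq_getElem W 0 hi
        rw [hgetD]
        have : (NN15T.Lst g f (M * m' + t))[φ m' + i]'hilt = W[i]'(hi) := by
          simp only [hblock m']
          rw [List.getElem_append_right (by exact Nat.le_add_right _ i)]
          congr 1
          show φ m' + i - (NN15T.Lst g f (M * m')).length = i
          have : φ m' = (NN15T.Lst g f (M * m')).length := rfl
          omega
        rw [this]
    have hfin : ({j : ℕ | j + W.length ≤ L N ∧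
        ∀ i < W.length, digitSeq g f (j + i) = W.getD i 0}).Finite := by
      apply Set.Finite.subset (Set.finite_Iic (L N))
      intro j hj
      exact le_trans (Nat.le_add_right j W.length) hj.1
    have hcard : (φ '' (Finset.range K : Set ℕ)).ncard = K := by
      rw [Set.ncard_image_of_injective _ hφmono.injective, Set.ncard_coe_finset,
        Finset.card_range]
    calc K = (φ '' (Finset.range K : Set ℕ)).ncard := hcard.symm
      _ ≤ occCount (digitSeq g f) W (L N) := Set.ncard_le_ncard hsub hfin
  -- length upper bound
  have hLle : ∀ N : ℕ, L N ≤ C * N := by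
    intro N
    have h1 : L N = ∑ i ∈ Finset.range N, (Nat.digits g (f (i + 1))).length :=
      NN15T.length_Lst_eq_sum g f N
    have h2 : ∀ i : ℕ, (Nat.digits g (f (i + 1))).length
        ≤ 1 + ∑ p ∈ G, (Nat.log g p + 1) * (i + 1).factorization p := by
      intro i
      rw [Nat.digits_len g _ hg1 (hfpos _ (Nat.succ_ne_zero i))]
      have hfS : f (i + 1) = f (NN15T.S G (i + 1)) :=
        NN15T.f_eq_f_S hGp f hf1 hfmul hsmall hGmem _ (Nat.succ_ne_zero i)
      have hfle : f (i + 1) ≤ NN15T.S G (i + 1) := by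
        rw [hfS]
        exact Nat.le_of_dvd (Nat.pos_of_ne_zero (NN15T.S_ne_zero hGp _))
          (hfdvd _ (Nat.one_le_iff_ne_zero.mpr (NN15T.S_ne_zero hGp _)))
      have := le_trans (Nat.log_mono_right hfle) (NN15T.log_S_le hg1 (i + 1))
      simp only [Nat.succ_eq_add_one] at this ⊢
      omega
    calc L N ≤ ∑ i ∈ Finset.range N,
          (1 + ∑ p ∈ G, (Nat.log g p + 1) * (i + 1).factorization p) := by
          rw [h1]; exact Finset.sum_le_sum (fun i _ => h2 i)
      _ = N + ∑ p ∈ G, (Nat.log g p + 1) * (∑ i ∈ Finset.range N, (i + 1).factorization p) := by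
          rw [Finset.sum_add_distrib, Finset.sum_const, Finset.card_range, smul_eq_mul,
            mul_one, Finset.sum_comm]
          congr 1
          apply Finset.sum_congr rfl
          intro p _
          rw [Finset.mul_sum]
      _ ≤ N + ∑ p ∈ G, (Nat.log g p + 1) * N := by
          apply Nat.add_le_add_left
          apply Finset.sum_le_sum
          intro p hp
          exact Nat.mul_le_mul_left _ (NN15T.sum_factorization_le (hGp p hp) N)
      _ = C * N := by
          rw [← Finset.sum_mul, hCdef]
          ring
  -- key numeric bound : 8 * C * M < g ^ W.length
  have hkey : 8 * C * M < g ^ W.length := by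
    calc 8 * C * M ≤ 8 * C * (q * t ^ r) := by
          have := Nat.mul_le_mul_left (8 * C) hMle
          omega
      _ = 8 * C * q * t ^ r := by ring
      _ < 2 ^ t := htbig
      _ ≤ 2 ^ W.length := Nat.pow_le_pow_right (by omega) hWlen
      _ ≤ g ^ W.length := Nat.pow_le_pow_left hg _
  -- normality gives the contradiction
  have hW := hnorm W hWne hWlt
  set c : ℝ := ((g : ℝ) ^ W.length)⁻¹ with hcdef
  have hgpow : (0:ℝ) < (g:ℝ) ^ W.length := by positivity
  have hc0 : 0 < c := by positivity
  have hLtend : Tendsto L atTop atTop :=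
    tendsto_atTop_mono (NN15T.le_length_Lst g f hfpos) tendsto_id
  have h2 : Tendsto (fun N : ℕ => (occCount (digitSeq g f) W (L N) : ℝ) / (L N : ℝ))
      atTop (nhds c) := hW.comp hLtend
  have hev : ∀ᶠ N : ℕ in atTop,
      (occCount (digitSeq g f) W (L N) : ℝ) / (L N : ℝ) < 2 * c :=
    h2.eventually (eventually_lt_nhds (by linarith))
  obtain ⟨N, hNev, hN2t⟩ := (hev.and (eventually_ge_atTop (2 * t + 1))).exists
  -- final numeric contradiction
  have htN : t ≤ N := by omega
  have hN1 : 1 ≤ N := by omega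
  have hLpos : 0 < L N := lt_of_lt_of_le hN1 (NN15T.le_length_Lst g f hfpos N)
  have hoccN := hocc N htN
  have hoccR : ((N - t) / M + 1 : ℕ) ≤ (occCount (digitSeq g f) W (L N) : ℝ) := by
    exact_mod_cast hoccN
  have hdivlow : ((N : ℝ) - t) / M < ((N - t) / M + 1 : ℕ) := by
    have h1 : (N - t : ℕ) < M * ((N - t) / M) + M := by
      have := Nat.div_add_mod (N - t) M
      have := Nat.mod_lt (N - t) (show 0 < M by omega)
      omega
    have h2 : ((N - t : ℕ) : ℝ) = (N : ℝ) - t := by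
      push_cast [Nat.cast_sub htN]; ring
    have h1R : ((N - t : ℕ) : ℝ) < (M : ℝ) * (((N - t) / M : ℕ) : ℝ) + (M : ℝ) := by
      exact_mod_cast h1
    rw [div_lt_iff₀ (by exact_mod_cast hM1 : (0:ℝ) < (M:ℝ))]
    push_cast
    push_cast at h1R h2
    nlinarith [h1R, h2]
  have hupper : (occCount (digitSeq g f) W (L N) : ℝ) < 2 * c * (C * N) := by
    have hd := hNev
    rw [div_lt_iff₀ (by exact_mod_cast hLpos : (0:ℝ) < (L N : ℝ))] at hd
    have hLC : ((L N : ℕ) : ℝ) ≤ (C : ℝ) * N := by exact_mod_cast hLle N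
    nlinarith
  have hcsmall : 2 * c * (C * N) < (N : ℝ) / (4 * M) := by
    have hkeyR : (8 * C * M : ℝ) < (g : ℝ) ^ W.length := by exact_mod_cast hkey
    have hCpos : (0:ℝ) < C := by exact_mod_cast hC1
    have hMpos : (0:ℝ) < M := by exact_mod_cast hM1
    have hNpos : (0:ℝ) < N := by exact_mod_cast hN1
    have h8 : (0:ℝ) < 8 * (C:ℝ) * M := by positivity
    have hkeyR' : 8 * (C:ℝ) * M < (g : ℝ) ^ W.length := by push_cast at hkeyR; linarith
    have hcinv : c < (8 * (C:ℝ) * M)⁻¹ := by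
      rw [hcdef]
      exact inv_strictAnti₀ h8 hkeyR'
    have hstep : 2 * c * ((C:ℝ) * N) < 2 * (8 * (C:ℝ) * M)⁻¹ * ((C:ℝ) * N) := by
      apply mul_lt_mul_of_pos_right _ (mul_pos hCpos hNpos)
      linarith
    have hMne : (M:ℝ) ≠ 0 := ne_of_gt hMpos
    have hCne : (C:ℝ) ≠ 0 := ne_of_gt hCpos
    have heq : 2 * (8 * (C:ℝ) * M)⁻¹ * ((C:ℝ) * N) = (N : ℝ) / (4 * M) := by
      rw [div_eq_mul_inv]
      rw [show (8 * (C:ℝ) * M) = (C:ℝ) * (8 * M) by ring,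
        show ((4:ℝ) * M) = (4 * M : ℝ) by ring]
      rw [mul_inv (C:ℝ) (8 * (M:ℝ))]
      field_simp
      ring
    linarith
  -- combine
  have hfinal : ((N : ℝ) - t) / M < (N : ℝ) / (4 * M) := by
    calc ((N : ℝ) - t) / M < ((N - t) / M + 1 : ℕ) := hdivlow
      _ ≤ (occCount (digitSeq g f) W (L N) : ℝ) := hoccR
      _ < 2 * c * (C * N) := hupper
      _ < (N : ℝ) / (4 * M) := hcsmall
  have hMpos : (0:ℝ) < M := by exact_mod_cast hM1
  rw [div_lt_div_iff₀ hMpos (by positivity)] at hfinal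
  have hNt : (N : ℝ) ≥ 2 * (t:ℝ) + 1 := by exact_mod_cast hN2t
  have htpos : (1:ℝ) ≤ (t:ℝ) := by exact_mod_cast ht1
  nlinarith [hMpos, hfinal, hNt, htpos]
end

section
/- Fix an integer base g ≥ 2. Let f : ℕ → ℕ be multiplicative (f(1) = 1 and f(mn) = f(m)·f(n) whenever gcd(m,n) = 1) with f(n) ∣ n for every n ≥ 1. Suppose the set G = {p prime : f(p) = p} is finite and that f(p^k) = 1 for every prime p ∉ G and every k ≥ 1. Then there exists a constant C (depending only on f and g) such that ∑_{1 ≤ m ≤ n} L(f(m)) ≤ C·n for all n ≥ 1. -/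
open Filter

theorem stmt16 (g : ℕ) (hg : 2 ≤ g) (f : ℕ → ℕ)
    (hf1 : f 1 = 1) (hfmul : ∀ m n : ℕ, Nat.Coprime m n → f (m * n) = f m * f n)
    (hfdvd : ∀ n : ℕ, 1 ≤ n → f n ∣ n)
    (hGfin : {p : ℕ | p.Prime ∧ f p = p}.Finite)
    (hsmall : ∀ p : ℕ, p.Prime → f p ≠ p → ∀ k : ℕ, 1 ≤ k → f (p ^ k) = 1) :
    ∃ C : ℝ, ∀ n : ℕ, 1 ≤ n →
      (∑ m ∈ Finset.Icc 1 n, ((Nat.digits g (f m)).length : ℝ)) ≤ C * n := by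
  classical
  set Gf : Finset ℕ := hGfin.toFinset with hGfdef
  set P : ℕ := max 2 (Gf.sup id) with hPdef
  have hP2 : 2 ≤ P := le_max_left _ _
  set t : ℕ := Nat.log 2 P + 1 with htdef
  set S : ℕ → ℕ := fun m => ∑ p ∈ Gf, m.factorization p with hSdef
  -- f m ≥ 1 for m ≥ 1
  have hfpos : ∀ m : ℕ, 1 ≤ m → 1 ≤ f m := fun m hm =>
    Nat.pos_of_dvd_of_pos (hfdvd m hm) hm
  -- Key structural bound
  have key : ∀ m : ℕ, 1 ≤ m → f m ≤ P ^ S m := by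
    intro m
    induction m using Nat.recOnPosPrimePosCoprime with
    | prime_pow p k hp hk =>
      intro _
      by_cases hfp : f p = p
      · have hpG : p ∈ Gf := by
          rw [hGfdef, Set.Finite.mem_toFinset]
          exact ⟨hp, hfp⟩
        have hpP : p ≤ P :=
          le_trans (Finset.le_sup (f := id) hpG) (le_max_right _ _)
        have hkS : k ≤ S (p ^ k) := by
          have h1 : (p ^ k).factorization p = k := by
            rw [hp.factorization_pow]; simp
          calc k = (p ^ k).factorization p := h1.symm
            _ ≤ S (p ^ k) :=
              Finset.single_le_sum (fun q _ => Nat.zero_le _) hpG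
        calc f (p ^ k) ≤ p ^ k :=
              Nat.le_of_dvd (pow_pos hp.pos k)
                (hfdvd _ (Nat.one_le_iff_ne_zero.mpr (pow_ne_zero k hp.pos.ne')))
          _ ≤ P ^ k := Nat.pow_le_pow_left hpP k
          _ ≤ P ^ S (p ^ k) := Nat.pow_le_pow_right (by omega) hkS
      · rw [hsmall p hp hfp k hk]
        exact Nat.one_le_pow _ _ (by omega)
    | zero => intro h; omega
    | one =>
      intro _
      simp [hf1, hSdef]
    | coprime a b ha hb hab iha ihb =>
      intro _
      have hSab : S (a * b) = S a + S b := by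
        rw [hSdef]
        simp only
        rw [← Finset.sum_add_distrib]
        refine Finset.sum_congr rfl fun q _ => ?_
        rw [Nat.factorization_mul (by omega) (by omega)]
        rfl
      rw [hfmul a b hab, hSab, pow_add]
      exact Nat.mul_le_mul (iha (by omega)) (ihb (by omega))
  -- Digit length bound
  have hlen : ∀ m : ℕ, 1 ≤ m → (Nat.digits g (f m)).length ≤ t * S m + 1 := by
    intro m hm
    have hfm : f m ≠ 0 := by have := hfpos m hm; omega
    rw [Nat.digits_len g (f m) (by omega) hfm]
    have h1 : Nat.log g (f m) ≤ Nat.log 2 (f m) := Nat.log_anti_left (by norm_num) hg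
    have h2 : Nat.log 2 (f m) ≤ Nat.log 2 (P ^ S m) :=
      Nat.log_mono_right (key m hm)
    have h3 : Nat.log 2 (P ^ S m) ≤ t * S m := by
      rcases Nat.eq_zero_or_pos (S m) with hS0 | hSpos
      · simp [hS0]
      · have hPlt : P < 2 ^ t := Nat.lt_pow_succ_log_self (by norm_num) P
        have : P ^ S m < 2 ^ (t * S m) := by
          rw [pow_mul]
          exact Nat.pow_lt_pow_left hPlt (by omega)
        exact le_of_lt (Nat.log_lt_of_lt_pow (pow_ne_zero _ (by omega)) this)
    omega
  -- Sum of S over Icc 1 n is at most |Gf| * n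
  have hsum : ∀ n : ℕ, 1 ≤ n → ∑ m ∈ Finset.Icc 1 n, S m ≤ Gf.card * n := by
    intro n hn
    have hswap : ∑ m ∈ Finset.Icc 1 n, S m
        = ∑ p ∈ Gf, ∑ m ∈ Finset.Icc 1 n, m.factorization p :=
      Finset.sum_comm
    rw [hswap]
    have hfac : ∀ p ∈ Gf, ∑ m ∈ Finset.Icc 1 n, m.factorization p ≤ n := by
      intro p hpG
      have hp : p.Prime := by
        rw [hGfdef, Set.Finite.mem_toFinset] at hpG; exact hpG.1
      haveI : Fact p.Prime := ⟨hp⟩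
      have hprod : (∏ m ∈ Finset.Icc 1 n, m) = Nat.factorial n := by
        rw [← Finset.Ico_add_one_right_eq_Icc]
        exact Finset.prod_Ico_id_eq_factorial n
      have h1 : ∑ m ∈ Finset.Icc 1 n, m.factorization p = (Nat.factorial n).factorization p := by
        rw [← hprod, Nat.factorization_prod (fun m hm => by
          simp only [Finset.mem_Icc] at hm; omega)]
        simp
      rw [h1, Nat.factorization_def _ hp]
      have h2 : (p - 1) * padicValNat p (Nat.factorial n) = n - (p.digits n).sum :=
        sub_one_mul_padicValNat_factorial n
      have hp2 : 2 ≤ p := hp.two_le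
      calc padicValNat p (Nat.factorial n) ≤ (p - 1) * padicValNat p (Nat.factorial n) :=
            Nat.le_mul_of_pos_left _ (by omega)
        _ = n - (p.digits n).sum := h2
        _ ≤ n := Nat.sub_le _ _
    exact le_trans (Finset.sum_le_sum hfac)
      (by rw [Finset.sum_const, smul_eq_mul])
  -- Conclude
  refine ⟨(t * Gf.card + 1 : ℕ), fun n hn => ?_⟩
  have hnat : ∑ m ∈ Finset.Icc 1 n, (Nat.digits g (f m)).length
      ≤ (t * Gf.card + 1) * n := by
    calc ∑ m ∈ Finset.Icc 1 n, (Nat.digits g (f m)).length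
        ≤ ∑ m ∈ Finset.Icc 1 n, (t * S m + 1) :=
          Finset.sum_le_sum (fun m hm => hlen m (Finset.mem_Icc.mp hm).1)
      _ = t * (∑ m ∈ Finset.Icc 1 n, S m) + n := by
          rw [Finset.sum_add_distrib, Finset.mul_sum, Finset.sum_const,
            Nat.card_Icc, smul_eq_mul]
          omega
      _ ≤ t * (Gf.card * n) + n := by
          have := hsum n hn
          exact Nat.add_le_add_right (Nat.mul_le_mul_left t this) n
      _ = (t * Gf.card + 1) * n := by ring
  calc (∑ m ∈ Finset.Icc 1 n, ((Nat.digits g (f m)).length : ℝ))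
      = ((∑ m ∈ Finset.Icc 1 n, (Nat.digits g (f m)).length : ℕ) : ℝ) := by
        push_cast; ring
    _ ≤ (((t * Gf.card + 1) * n : ℕ) : ℝ) := by exact_mod_cast hnat
    _ = (t * Gf.card + 1 : ℕ) * n := by push_cast; ring
end
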